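/- arXiv:1810.00185 — 3 statements merged into one kernel-verified Lean document; each statement's English description precedes it below -/
import Mathlib

section
/- The graph Γ(d) is connected: any two d-dimensional polytopes contained in ℝ^d can be transformed into one another by a finite sequence of insertion moves and deletion moves, all intermediate polytopes being d-dimensional polytopes in ℝ^d. -/
open Set

/-- Points of `ℝ^d`. -/
abbrev Pt (d : ℕ) := Fin d → ℝ

/-- A polytope in `ℝ^d` is the convex hull of a finite set of points. -/
def IsPolytope (d : ℕ) (P : Set (Pt d)) : Prop :=
  ∃ S : Finset (Pt d), P = convexHull ℝ (S : Set (Pt d))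

/-- A set is `d`-dimensional (full-dimensional) if its affine hull is all of `ℝ^d`. -/
def FullDim (d : ℕ) (P : Set (Pt d)) : Prop := affineSpan ℝ P = ⊤

/-- A point `x` can be inserted in `P` when the convex hull of `P ∪ {x}` has as its
vertex set (set of extreme points) exactly the vertex set of `P` together with `x`. -/
def CanInsert (d : ℕ) (P : Set (Pt d)) (x : Pt d) : Prop :=
  Set.extremePoints ℝ (convexHull ℝ (P ∪ {x})) = Set.extremePoints ℝ P ∪ {x}

/-- A vertex `v` of `P` can be deleted from `P` when the convex hull of the remaining
vertices is `d`-dimensional. -/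
def CanDelete (d : ℕ) (P : Set (Pt d)) (v : Pt d) : Prop :=
  v ∈ Set.extremePoints ℝ P ∧
    FullDim d (convexHull ℝ (Set.extremePoints ℝ P \ {v}))

/-- `Q` is obtained from `P` by an insertion move. -/
def InsertMove (d : ℕ) (P Q : Set (Pt d)) : Prop :=
  ∃ x : Pt d, CanInsert d P x ∧ Q = convexHull ℝ (P ∪ {x})

/-- `Q` is obtained from `P` by a deletion move. -/
def DeleteMove (d : ℕ) (P Q : Set (Pt d)) : Prop :=
  ∃ v : Pt d, CanDelete d P v ∧ Q = convexHull ℝ (Set.extremePoints ℝ P \ {v})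

/-- Adjacency: one polytope is obtained from the other by inserting a point or
deleting a vertex. -/
def Move (d : ℕ) (P Q : Set (Pt d)) : Prop :=
  InsertMove d P Q ∨ DeleteMove d P Q ∨ InsertMove d Q P ∨ DeleteMove d Q P

/-- There is a path of at most `n` edges from `P` to `Q` all of whose vertices lie in
the class `C` of polytopes (i.e. `P` and `Q` are at distance at most `n` in the subgraph
induced by `C`). -/
def PathLE (d : ℕ) (C : Set (Set (Pt d))) (P Q : Set (Pt d)) (n : ℕ) : Prop :=
  ∃ (m : ℕ) (f : ℕ → Set (Pt d)), m ≤ n ∧ f 0 = P ∧ f m = Q ∧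
    (∀ i ≤ m, f i ∈ C) ∧ ∀ i < m, Move d (f i) (f (i + 1))

/-- The subgraph induced by the class `C` is connected. -/
def ConnectedIn (d : ℕ) (C : Set (Set (Pt d))) : Prop :=
  ∀ P ∈ C, ∀ Q ∈ C, ∃ n, PathLE d C P Q n

/-- The vertex set of the graph `Γ(d)`: the `d`-dimensional polytopes in `ℝ^d`. -/
def Gamma (d : ℕ) : Set (Set (Pt d)) := {P | IsPolytope d P ∧ FullDim d P}

/-- The number of vertices of a polytope. -/
noncomputable def nVerts (d : ℕ) (P : Set (Pt d)) : ℕ := (Set.extremePoints ℝ P).ncard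

/-- A lattice point of `ℝ^d`. -/
def IsLatticePt (d : ℕ) (x : Pt d) : Prop := ∀ i, ∃ z : ℤ, x i = (z : ℝ)

/-- A lattice polytope: all its vertices are lattice points. -/
def IsLatticePoly (d : ℕ) (P : Set (Pt d)) : Prop :=
  ∀ v ∈ Set.extremePoints ℝ P, IsLatticePt d v

/-- The hypercube `[0,k]^d`. -/
def Cube (d k : ℕ) : Set (Pt d) := {x | ∀ i, x i ∈ Set.Icc (0 : ℝ) (k : ℝ)}

/-- The vertex set of `Λ(d)`: the `d`-dimensional lattice polytopes in `ℝ^d`. -/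
def Lambda (d : ℕ) : Set (Set (Pt d)) :=
  {P | IsPolytope d P ∧ FullDim d P ∧ IsLatticePoly d P}

/-- The vertex set of `Λ(d,k)`: the `d`-dimensional lattice polytopes in `[0,k]^d`. -/
def LambdaK (d k : ℕ) : Set (Set (Pt d)) := {P ∈ Lambda d | P ⊆ Cube d k}

/-- A facet of a polytope `P`: an exposed face of dimension `d-1`. -/
def IsFacet (d : ℕ) (P F : Set (Pt d)) : Prop :=
  IsExposed ℝ P F ∧ F.Nonempty ∧ F ≠ P ∧
    Module.finrank ℝ ↥(vectorSpan ℝ F) = d - 1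

/-- `H` is the closed half-space `H_F^-(P)` bounded by the affine hull of the facet `F`
and satisfying `P ∩ H = F`. -/
def BoundingHalfspace (d : ℕ) (P F H : Set (Pt d)) : Prop :=
  ∃ (l : (Pt d) →ₗ[ℝ] ℝ) (c : ℝ), l ≠ 0 ∧
    H = {x | l x ≤ c} ∧
    (affineSpan ℝ F : Set (Pt d)) = {x | l x = c} ∧
    P ∩ H = F

/-- The cone `C_v(P)`: the intersection of the half-spaces `H_F^-(P)` over all facets
`F` of `P` incident to `v`. -/
def Cone (d : ℕ) (P : Set (Pt d)) (v : Pt d) : Set (Pt d) :=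
  {x | ∀ F H : Set (Pt d), IsFacet d P F → v ∈ F → BoundingHalfspace d P F H → x ∈ H}

/-- A set `A` is in convex position: every finite subset of `A` is the vertex set of
a polytope, namely of its own convex hull. -/
def ConvexPosition (d : ℕ) (A : Set (Pt d)) : Prop :=
  ∀ S : Finset (Pt d), (S : Set (Pt d)) ⊆ A →
    Set.extremePoints ℝ (convexHull ℝ (S : Set (Pt d))) = (S : Set (Pt d))

namespace Stmt2

open Filter

variable {d : ℕ}

/-- separation by a linear functional implies non-membership in convex hull -/
lemma not_mem_convexHull_of_sep {l : (Pt d) →ₗ[ℝ] ℝ} {x : Pt d} {W : Set (Pt d)}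
    (h : ∀ y ∈ W, l y < l x) : x ∉ convexHull ℝ W := by
  intro hx
  have hconv : Convex ℝ {z : Pt d | l z < l x} := convex_halfSpace_lt ⟨l.map_add, l.map_smul⟩ _
  have h2 : l x < l x := convexHull_min h hconv hx
  exact lt_irrefl _ h2

/-- vertex criterion: a point of `W` outside the hull of the others is extreme in `conv W`. -/
lemma mem_extremePoints_of_not_mem {W : Set (Pt d)} (hW : W.Finite)
    {x : Pt d} (hxW : x ∈ W) (hx : x ∉ convexHull ℝ (W \ {x})) :
    x ∈ Set.extremePoints ℝ (convexHull ℝ W) := by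
  rcases Set.eq_empty_or_nonempty (W \ {x}) with he | hne
  · have hWx : W = {x} := by
      apply Set.eq_singleton_iff_unique_mem.2 ⟨hxW, fun y hy => ?_⟩
      by_contra hyx
      exact Set.eq_empty_iff_forall_notMem.1 he y ⟨hy, hyx⟩
    rw [hWx, convexHull_singleton, extremePoints_singleton]
    exact rfl
  · -- separate x from K := conv (W \ {x})
    have hK : IsClosed (convexHull ℝ (W \ {x})) :=
      (hW.subset Set.diff_subset).isClosed_convexHull ℝ
    obtain ⟨f, u, hfu, hux⟩ :=
      geometric_hahn_banach_closed_point (convex_convexHull ℝ _) hK hx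
    -- conv W ⊆ {z | f z ≤ f x}
    have hbound : convexHull ℝ W ⊆ {z : Pt d | f z ≤ f x} := by
      apply convexHull_min ?_ (convex_halfSpace_le ⟨f.map_add, fun c y => f.map_smul c y⟩ _)
      intro y hy
      by_cases hyx : y = x
      · simp [hyx]
      · have : y ∈ convexHull ℝ (W \ {x}) := subset_convexHull ℝ _ ⟨hy, hyx⟩
        exact le_of_lt ((hfu y this).trans hux)
    -- any point of conv W where f attains value f x equals x
    have hrigid : ∀ y ∈ convexHull ℝ W, f y = f x → y = x := by
      intro y hy hfy
      have hWeq : W = insert x (W \ {x}) := by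
        rw [Set.insert_diff_singleton, Set.insert_eq_self.2 hxW]
      rw [hWeq, convexHull_insert hne, mem_convexJoin] at hy
      obtain ⟨x', hx', z, hz, hyz⟩ := hy
      rw [Set.mem_singleton_iff] at hx'
      obtain ⟨a, b, ha, hb, hab, hy'⟩ := hyz
      rw [hx'] at hy'
      have hfz : f z < f x := (hfu z hz).trans hux
      have hfy' : a * f x + b * f z = f x := by
        have hcong := congrArg f hy'
        rw [map_add, map_smul, map_smul, smul_eq_mul, smul_eq_mul, hfy] at hcong
        exact hcong
      have hsplit : a * f x + b * f x = f x := by rw [← add_mul, hab, one_mul]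
      have hb0 : b = 0 := by
        by_contra hbne
        have hbpos : 0 < b := lt_of_le_of_ne hb (Ne.symm hbne)
        have : b * f z < b * f x := mul_lt_mul_of_pos_left hfz hbpos
        linarith
      have ha1 : a = 1 := by linarith
      rw [← hy', hb0, ha1]
      simp
    refine ⟨subset_convexHull ℝ _ hxW, ?_⟩
    intro x₁ h₁ x₂ h₂ hseg
    obtain ⟨a, b, ha, hb, hab, hsum⟩ := hseg
    have hf1 : f x₁ ≤ f x := hbound h₁
    have hf2 : f x₂ ≤ f x := hbound h₂
    have hx' : a * f x₁ + b * f x₂ = f x := by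
      have hcong := congrArg f hsum
      rw [map_add, map_smul, map_smul, smul_eq_mul, smul_eq_mul] at hcong
      exact hcong
    have hsplit : a * f x + b * f x = f x := by rw [← add_mul, hab, one_mul]
    have e1 : a * f x₁ ≤ a * f x := mul_le_mul_of_nonneg_left hf1 ha.le
    have e2 : b * f x₂ ≤ b * f x := mul_le_mul_of_nonneg_left hf2 hb.le
    have k1 : a * f x₁ = a * f x := le_antisymm e1 (by linarith)
    have k2 : b * f x₂ = b * f x := le_antisymm e2 (by linarith)
    refine (And.left (⟨?_, ?_⟩ : x₁ = x ∧ x₂ = x))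
    · exact hrigid x₁ h₁ (mul_left_cancel₀ ha.ne' k1)
    · exact hrigid x₂ h₂ (mul_left_cancel₀ hb.ne' k2)

end Stmt2
namespace Stmt2

variable {d : ℕ}

/-- extreme points of the hull of a subset `W` of a set `X` in convex position. -/
lemma ext_eq {X W : Set (Pt d)} (hX : X.Finite) (hWX : W ⊆ X)
    (hpos : ∀ x ∈ X, x ∉ convexHull ℝ (X \ {x})) :
    Set.extremePoints ℝ (convexHull ℝ W) = W := by
  apply subset_antisymm extremePoints_convexHull_subset
  intro x hx
  refine mem_extremePoints_of_not_mem (hX.subset hWX) hx (fun hc => ?_)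
  exact hpos x (hWX hx) (convexHull_mono (Set.diff_subset_diff_left hWX) hc)

/-- hull membership in Gamma -/
lemma convexHull_mem_gamma {W : Set (Pt d)} (hW : W.Finite)
    (hspan : affineSpan ℝ W = ⊤) : convexHull ℝ W ∈ Gamma d := by
  refine ⟨⟨hW.toFinset, by rw [Set.Finite.coe_toFinset]⟩, ?_⟩
  unfold FullDim
  rw [affineSpan_convexHull]
  exact hspan

/-- vertex data of a polytope in Gamma -/
lemma gamma_vertexSet {P : Set (Pt d)} (hP : P ∈ Gamma d) :
    ∃ V : Set (Pt d), V.Finite ∧ Set.extremePoints ℝ P = V ∧ convexHull ℝ V = P ∧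
      affineSpan ℝ V = ⊤ ∧ ∀ x ∈ V, x ∉ convexHull ℝ (V \ {x}) := by
  obtain ⟨⟨S, rfl⟩, hfull⟩ := hP
  set P := convexHull ℝ (S : Set (Pt d)) with hPdef
  have hsub : Set.extremePoints ℝ P ⊆ (S : Set (Pt d)) := extremePoints_convexHull_subset
  have hfin : (Set.extremePoints ℝ P).Finite := S.finite_toSet.subset hsub
  have hconv : convexHull ℝ (Set.extremePoints ℝ P) = P := by
    have hcl : closure (convexHull ℝ (Set.extremePoints ℝ P)) = P :=
      closure_convexHull_extremePoints (S.finite_toSet.isCompact_convexHull ℝ)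
        (convex_convexHull ℝ _)
    calc convexHull ℝ (Set.extremePoints ℝ P)
        = closure (convexHull ℝ (Set.extremePoints ℝ P)) :=
          ((hfin.isClosed_convexHull ℝ).closure_eq).symm
      _ = P := hcl
  refine ⟨Set.extremePoints ℝ P, hfin, rfl, hconv, ?_, ?_⟩
  · rw [← affineSpan_convexHull, hconv]; exact hfull
  · intro x hxV hmem
    have hsubP : convexHull ℝ (Set.extremePoints ℝ P \ {x}) ⊆ P := by
      nth_rewrite 2 [← hconv]
      exact convexHull_mono Set.diff_subset
    have : x ∈ Set.extremePoints ℝ (convexHull ℝ (Set.extremePoints ℝ P \ {x})) :=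
      inter_extremePoints_subset_extremePoints_of_subset hsubP ⟨hmem, hxV⟩
    have := extremePoints_convexHull_subset this
    exact this.2 rfl

/-- connectedness relation within Gamma -/
def Rel (d : ℕ) (P Q : Set (Pt d)) : Prop := ∃ n, PathLE d (Gamma d) P Q n

lemma rel_refl {P : Set (Pt d)} (hP : P ∈ Gamma d) : Rel d P P :=
  ⟨0, 0, fun _ => P, le_refl _, rfl, rfl, fun _ _ => hP, fun i hi => absurd hi (by omega)⟩

lemma move_symm {P Q : Set (Pt d)} (h : Move d P Q) : Move d Q P := by
  unfold Move at h ⊢; tauto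

lemma rel_symm {P Q : Set (Pt d)} (h : Rel d P Q) : Rel d Q P := by
  obtain ⟨n, m, f, hmn, h0, hm, hmem, hmov⟩ := h
  refine ⟨n, m, fun i => f (m - i), hmn, by simp [hm], by simp [h0], ?_, ?_⟩
  · intro i hi; exact hmem (m - i) (by omega)
  · intro i hi
    have he : m - i = (m - (i + 1)) + 1 := by omega
    show Move d (f (m - i)) (f (m - (i + 1)))
    rw [he]
    exact move_symm (hmov (m - (i + 1)) (by omega))

lemma rel_trans {P Q R : Set (Pt d)} (h1 : Rel d P Q) (h2 : Rel d Q R) : Rel d P R := by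
  obtain ⟨n1, m1, f, hmn1, hf0, hfm, hfmem, hfmov⟩ := h1
  obtain ⟨n2, m2, g, hmn2, hg0, hgm, hgmem, hgmov⟩ := h2
  refine ⟨n1 + n2, m1 + m2, fun i => if i ≤ m1 then f i else g (i - m1), by omega, ?_, ?_, ?_, ?_⟩
  · simp [hf0]
  · by_cases h : m2 = 0
    · subst h
      simp only [Nat.add_zero, le_refl, if_pos]
      rw [hfm, ← hg0]
      congr 1
    · have : ¬ (m1 + m2 ≤ m1) := by omega
      simp only [this, if_false]
      rw [show m1 + m2 - m1 = m2 by omega, hgm]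
  · intro i hi
    by_cases h : i ≤ m1
    · simp only [h, if_pos]; exact hfmem i (by omega)
    · simp only [h, if_neg, if_false]; exact hgmem (i - m1) (by omega)
  · intro i hi
    by_cases h : i + 1 ≤ m1
    · have h' : i ≤ m1 := by omega
      simp only [h, h', if_pos]
      exact hfmov i (by omega)
    · by_cases h' : i ≤ m1
      · -- i = m1
        have : i = m1 := by omega
        subst this
        simp only [h, h', if_pos, if_neg, if_false]
        rw [hfm, ← hg0, show i + 1 - i = 1 by omega]
        exact hgmov 0 (by omega)
      · have h'' : ¬ (i + 1 ≤ m1) := by omega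
        simp only [h', h'', if_neg, if_false]
        rw [show i + 1 - m1 = (i - m1) + 1 by omega]
        exact hgmov (i - m1) (by omega)

lemma rel_single {P Q : Set (Pt d)} (hP : P ∈ Gamma d) (hQ : Q ∈ Gamma d)
    (h : Move d P Q) : Rel d P Q := by
  refine ⟨1, 1, fun i => if i = 0 then P else Q, le_refl _, by simp, by simp, ?_, ?_⟩
  · intro i hi
    by_cases h0 : i = 0 <;> simp [h0, hP, hQ]
  · intro i hi
    have : i = 0 := by omega
    subst this
    simpa using h

/-- the insertion move within a convex-position configuration -/
lemma move_insert {X A : Set (Pt d)} (hX : X.Finite)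
    (hpos : ∀ x ∈ X, x ∉ convexHull ℝ (X \ {x}))
    (hAX : A ⊆ X) {x : Pt d} (hx : x ∈ X) :
    Move d (convexHull ℝ A) (convexHull ℝ (insert x A)) := by
  left
  refine ⟨x, ?_, ?_⟩
  · unfold CanInsert
    rw [convexHull_convexHull_union_left, Set.union_singleton,
      ext_eq hX (Set.insert_subset hx hAX) hpos, ext_eq hX hAX hpos, Set.union_singleton]
  · rw [convexHull_convexHull_union_left, Set.union_singleton]

/-- the deletion move within a convex-position configuration -/
lemma move_delete {X A : Set (Pt d)} (hX : X.Finite)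
    (hpos : ∀ x ∈ X, x ∉ convexHull ℝ (X \ {x}))
    (hAX : A ⊆ X) {x : Pt d} (hx : x ∈ A)
    (hspan : affineSpan ℝ (A \ {x}) = ⊤) :
    Move d (convexHull ℝ A) (convexHull ℝ (A \ {x})) := by
  right; left
  refine ⟨x, ⟨?_, ?_⟩, ?_⟩
  · rw [ext_eq hX hAX hpos]; exact hx
  · unfold FullDim
    rw [ext_eq hX hAX hpos, affineSpan_convexHull]
    exact hspan
  · rw [ext_eq hX hAX hpos]

end Stmt2
namespace Stmt2

variable {d : ℕ}

/-- Walk up from `conv A` to `conv X` by insertions, within a convex position set `X`. -/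
lemma rel_mono {X : Set (Pt d)} (hX : X.Finite)
    (hpos : ∀ x ∈ X, x ∉ convexHull ℝ (X \ {x})) :
    ∀ (n : ℕ) (A : Set (Pt d)), A ⊆ X → (X \ A).ncard = n →
      affineSpan ℝ A = ⊤ → Rel d (convexHull ℝ A) (convexHull ℝ X) := by
  intro n
  induction n using Nat.strong_induction_on with
  | _ n ih =>
    intro A hAX hcard hspan
    rcases Set.eq_empty_or_nonempty (X \ A) with he | ⟨x, hx⟩
    · have : A = X := subset_antisymm hAX (fun y hy => by
        by_contra hyA
        exact Set.eq_empty_iff_forall_notMem.1 he y ⟨hy, hyA⟩)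
      subst this
      exact rel_refl (convexHull_mem_gamma (hX.subset hAX) hspan)
    · have hXA : (X \ A).Finite := hX.subset Set.diff_subset
      set A' : Set (Pt d) := insert x A with hA'
      have hA'X : A' ⊆ X := Set.insert_subset hx.1 hAX
      have hspan' : affineSpan ℝ A' = ⊤ := by
        apply top_unique
        rw [← hspan]
        exact affineSpan_mono ℝ (Set.subset_insert _ _)
      have hless : (X \ A').ncard < n := by
        have h1 : X \ A' = (X \ A) \ {x} := by
          rw [hA']; ext y; simp only [Set.mem_diff, Set.mem_insert_iff, Set.mem_singleton_iff]
          tauto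
        rw [h1, ← hcard]
        exact Set.ncard_diff_singleton_lt_of_mem hx hXA
      have hmove : Move d (convexHull ℝ A) (convexHull ℝ A') :=
        move_insert hX hpos hAX hx.1
      have h1 : Rel d (convexHull ℝ A) (convexHull ℝ A') :=
        rel_single (convexHull_mem_gamma (hX.subset hAX) hspan)
          (convexHull_mem_gamma (hX.subset hA'X) hspan') hmove
      exact rel_trans h1 (ih _ hless A' hA'X rfl hspan')

/-- Any polytope in Gamma is connected to the hull of an affinely independent
spanning subset of its vertex set. -/
lemma rel_descent {P : Set (Pt d)} (hP : P ∈ Gamma d) :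
    ∃ t : Set (Pt d), t.Finite ∧ affineSpan ℝ t = ⊤ ∧
      AffineIndependent ℝ ((↑) : t → Pt d) ∧ Rel d P (convexHull ℝ t) := by
  obtain ⟨V, hVfin, hVext, hVconv, hVspan, hVpos⟩ := gamma_vertexSet hP
  obtain ⟨t, htV, htspan, htind⟩ := exists_affineIndependent ℝ (Pt d) V
  rw [hVspan] at htspan
  have h := rel_mono hVfin hVpos (V \ t).ncard t htV rfl htspan
  rw [hVconv] at h
  exact ⟨t, hVfin.subset htV, htspan, htind, rel_symm h⟩

end Stmt2
namespace Stmt2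

variable {d : ℕ}

/-- affine span of a translate -/
lemma span_translate {s : Set (Pt d)} (v : Pt d) (h : affineSpan ℝ s = ⊤) :
    affineSpan ℝ ((fun x => v + x) '' s) = ⊤ := by
  have him : (fun x => v + x) '' s = ⇑((AffineEquiv.constVAdd ℝ (Pt d) v).toAffineMap) '' s := by
    congr 1
  rw [him, ← AffineSubspace.map_span, h]
  apply AffineSubspace.ext
  intro x
  simp only [AffineSubspace.mem_map, AffineSubspace.mem_top, iff_true]
  exact ⟨(AffineEquiv.constVAdd ℝ (Pt d) v).symm x, trivial, by simp⟩

/-- affine span of a reflection -/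
lemma span_reflect {s : Set (Pt d)} (v : Pt d) (h : affineSpan ℝ s = ⊤) :
    affineSpan ℝ ((fun x => v - x) '' s) = ⊤ := by
  have him : (fun x => v - x) '' s = ⇑((AffineEquiv.constVSub ℝ v).toAffineMap) '' s := by
    congr 1
  rw [him, ← AffineSubspace.map_span, h]
  apply AffineSubspace.ext
  intro x
  simp only [AffineSubspace.mem_map, AffineSubspace.mem_top, iff_true]
  refine ⟨(AffineEquiv.constVSub ℝ v).symm x, trivial, by simp⟩

/-- simplex data: an affine basis given by points together with dual functionals -/
structure Spx (d : ℕ) (ι : Type) where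
  p : ι → Pt d
  w : ι → (Pt d →ₗ[ℝ] ℝ)
  c : ι → ℝ
  dual1 : ∀ k, w k (p k) + c k = 1
  dual0 : ∀ k m, k ≠ m → w k (p m) + c k = 0
  span : affineSpan ℝ (Set.range p) = ⊤

/-- translate a simplex by `v` -/
def Spx.translate {ι : Type} (S : Spx d ι) (v : Pt d) : Spx d ι where
  p k := v + S.p k
  w := S.w
  c k := S.c k - S.w k v
  dual1 k := by
    have h := S.dual1 k
    simp only [map_add]
    linarith
  dual0 k m hkm := by
    have h := S.dual0 k m hkm
    simp only [map_add]
    linarith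
  span := by
    have : Set.range (fun k => v + S.p k) = (fun x => v + x) '' Set.range S.p := by
      rw [← Set.range_comp]; rfl
    rw [this]
    exact span_translate v S.span

/-- reflect a simplex: `x ↦ v - x` -/
def Spx.reflect {ι : Type} (S : Spx d ι) (v : Pt d) : Spx d ι where
  p k := v - S.p k
  w k := -(S.w k)
  c k := S.c k + S.w k v
  dual1 k := by
    have h := S.dual1 k
    simp only [LinearMap.neg_apply, map_sub]
    linarith
  dual0 k m hkm := by
    have h := S.dual0 k m hkm
    simp only [LinearMap.neg_apply, map_sub]
    linarith
  span := by
    have : Set.range (fun k => v - S.p k) = (fun x => v - x) '' Set.range S.p := by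
      rw [← Set.range_comp]; rfl
    rw [this]
    exact span_reflect v S.span

variable {ι : Type}

/-- sum of the dual functionals vanishes (as the differential of the constant 1) -/
lemma Spx.sum_w [Fintype ι] (S : Spx d ι) : (∑ k, S.w k) = 0 := by
  classical
  set g : Pt d →ₗ[ℝ] ℝ := ∑ k, S.w k with hg
  have hgp : ∀ m, g (S.p m) = 1 - ∑ k, S.c k := by
    intro m
    rw [hg, LinearMap.sum_apply]
    have hval : ∀ k, S.w k (S.p m) = (if k = m then (1:ℝ) else 0) - S.c k := by
      intro k
      by_cases h : k = m
      · subst h; have := S.dual1 k; rw [if_pos rfl]; linarith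
      · have := S.dual0 k m h; rw [if_neg h]; linarith
    rw [Finset.sum_congr rfl (fun k _ => hval k), Finset.sum_sub_distrib,
      Finset.sum_ite_eq' Finset.univ m (fun _ => (1:ℝ))]
    simp
  have hker : vectorSpan ℝ (Set.range S.p) ≤ LinearMap.ker g := by
    rw [vectorSpan_def]
    apply Submodule.span_le.2
    rintro v ⟨x, hx, y, hy, rfl⟩
    obtain ⟨m, rfl⟩ := hx
    obtain ⟨m', rfl⟩ := hy
    simp only [SetLike.mem_coe, LinearMap.mem_ker, vsub_eq_sub, map_sub]
    rw [hgp m, hgp m']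
    ring
  have htop : vectorSpan ℝ (Set.range S.p) = ⊤ := by
    rw [← direction_affineSpan, S.span]
    exact AffineSubspace.direction_top ℝ _ _
  rw [htop, top_le_iff] at hker
  exact LinearMap.ker_eq_top.1 hker

lemma Spx.w_ne_zero (S : Spx d ι) (k : ι) {m : ι} (hm : m ≠ k) : S.w k ≠ 0 := by
  intro h0
  have h1 := S.dual1 k
  have h2 := S.dual0 k m (Ne.symm hm)
  rw [h0] at h1 h2
  simp only [LinearMap.zero_apply, zero_add] at h1 h2
  linarith

/-- a vector on which finitely many nonzero functionals are all nonvanishing -/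
lemma exists_good_u (G : Finset (Pt d →ₗ[ℝ] ℝ)) (hG : ∀ g ∈ G, g ≠ 0) :
    ∃ u : Pt d, ∀ g ∈ G, g u ≠ 0 := by
  classical
  induction G using Finset.induction_on with
  | empty => exact ⟨0, by simp⟩
  | @insert f G hf ih =>
    obtain ⟨u, hu⟩ := ih (fun g hg => hG g (Finset.mem_insert_of_mem hg))
    have hfne : f ≠ 0 := hG f (Finset.mem_insert_self f G)
    obtain ⟨v, hv⟩ : ∃ v, f v ≠ 0 := by
      by_contra hc
      push_neg at hc
      exact hfne (LinearMap.ext (fun x => by rw [hc x]; rfl))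
    obtain ⟨t, ht⟩ :=
      Infinite.exists_notMem_finset ((insert f G).image (fun g => -(g u) / (g v)))
    refine ⟨u + t • v, ?_⟩
    intro g hg h0
    rw [map_add, map_smul, smul_eq_mul] at h0
    by_cases hgv : g v = 0
    · rw [hgv, mul_zero, add_zero] at h0
      rcases Finset.mem_insert.1 hg with rfl | hgG
      · exact hv hgv
      · exact hu g hgG h0
    · apply ht
      apply Finset.mem_image.2 ⟨g, hg, ?_⟩
      field_simp
      linarith

/-- dichotomy: at least two positive or at least two negative values -/
lemma sign_split [Fintype ι] (hcard : 3 ≤ Fintype.card ι)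
    (a : ι → ℝ) (hsum : ∑ k, a k = 0) (hnz : ∀ k, a k ≠ 0) :
    (∀ i, ∃ j, j ≠ i ∧ 0 < a j) ∨ (∀ i, ∃ j, j ≠ i ∧ a j < 0) := by
  classical
  haveI hne : Nonempty ι := Fintype.card_pos_iff.1 (by omega)
  set Pos := Finset.univ.filter (fun k => 0 < a k) with hPos
  set Neg := Finset.univ.filter (fun k => a k < 0) with hNeg
  have hmem : ∀ k, k ∈ Pos ∨ k ∈ Neg := by
    intro k
    rcases lt_trichotomy (a k) 0 with h | h | h
    · right; simp [hNeg, h]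
    · exact absurd h (hnz k)
    · left; simp [hPos, h]
  have hPne : Pos.Nonempty := by
    by_contra hc
    rw [Finset.not_nonempty_iff_eq_empty] at hc
    have hall : ∀ k ∈ Finset.univ, a k < 0 := by
      intro k _
      rcases hmem k with h | h
      · rw [hc] at h; exact absurd h (Finset.notMem_empty k)
      · exact (Finset.mem_filter.1 h).2
    have hlt : ∑ k, a k < ∑ _k : ι, (0:ℝ) :=
      Finset.sum_lt_sum_of_nonempty Finset.univ_nonempty hall
    simp [hsum] at hlt
  have hNne : Neg.Nonempty := by
    by_contra hc
    rw [Finset.not_nonempty_iff_eq_empty] at hc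
    have hall : ∀ k ∈ Finset.univ, (0:ℝ) < a k := by
      intro k _
      rcases hmem k with h | h
      · exact (Finset.mem_filter.1 h).2
      · rw [hc] at h; exact absurd h (Finset.notMem_empty k)
    have hlt : ∑ _k : ι, (0:ℝ) < ∑ k, a k :=
      Finset.sum_lt_sum_of_nonempty Finset.univ_nonempty hall
    simp [hsum] at hlt
  have hdisj : Disjoint Pos Neg := by
    rw [Finset.disjoint_left]
    intro k hk hk'
    have h1 := (Finset.mem_filter.1 hk).2
    have h2 := (Finset.mem_filter.1 hk').2
    linarith
  have hcover : Pos ∪ Neg = Finset.univ := by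
    apply Finset.eq_univ_of_forall
    intro k
    rcases hmem k with h | h
    · exact Finset.mem_union_left _ h
    · exact Finset.mem_union_right _ h
  have hsumcard : Pos.card + Neg.card = Fintype.card ι := by
    rw [← Finset.card_union_of_disjoint hdisj, hcover, Finset.card_univ]
  by_cases h2 : 2 ≤ Pos.card
  · left
    intro i
    obtain ⟨j, hjP, hji⟩ := Finset.exists_mem_ne (s := Pos) (by omega) i
    exact ⟨j, hji, (Finset.mem_filter.1 hjP).2⟩
  · right
    have hp1 : 1 ≤ Pos.card := hPne.card_pos
    have h2' : 2 ≤ Neg.card := by omega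
    intro i
    obtain ⟨j, hjN, hji⟩ := Finset.exists_mem_ne (s := Neg) (by omega) i
    exact ⟨j, hji, (Finset.mem_filter.1 hjN).2⟩

end Stmt2
namespace Stmt2

open Filter

variable {d : ℕ}

lemma eventually_lt_zero {a b : ℝ} (ha : a < 0) : ∀ᶠ R in atTop, R * a + b < 0 := by
  filter_upwards [eventually_ge_atTop ((-b)/a + 1)] with R hR
  have h1 : ((-b)/a) * a = -b := div_mul_cancel₀ _ (ne_of_lt ha)
  have h2 : R * a ≤ ((-b)/a + 1) * a := mul_le_mul_of_nonpos_right hR ha.le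
  have h3 : ((-b)/a + 1) * a = -b + a := by rw [add_mul, h1, one_mul]
  linarith

lemma eventually_gt_zero {a b : ℝ} (ha : 0 < a) : ∀ᶠ R in atTop, 0 < R * a + b := by
  filter_upwards [eventually_ge_atTop ((-b)/a + 1)] with R hR
  have h1 : ((-b)/a) * a = -b := div_mul_cancel₀ _ (ne_of_gt ha)
  have h2 : ((-b)/a + 1) * a ≤ R * a := mul_le_mul_of_nonneg_right hR ha.le
  have h3 : ((-b)/a + 1) * a = -b + a := by rw [add_mul, h1, one_mul]
  linarith

/-- The key geometric lemma: if `u` has at least two positive coordinates for `S`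
and at least two negative coordinates for `T`, then `S` is connected to a far
translate of `T` in direction `u`. -/
lemma link {ι κ : Type} [Fintype ι] [Fintype κ] (S : Spx d ι) (T : Spx d κ) (u : Pt d)
    (hu1 : ∀ i, ∃ j, j ≠ i ∧ 0 < S.w j u)
    (hu2 : ∀ i, ∃ j, j ≠ i ∧ T.w j u < 0) :
    ∀ᶠ R : ℝ in atTop, Rel d (convexHull ℝ (Set.range S.p))
      (convexHull ℝ (Set.range ((T.translate (R • u)).p))) := by
  classical
  choose j hj hjpos using hu1
  choose j' hj' hjneg using hu2
  set M : ι → ℝ := fun i => max 0 (S.w i u / S.w (j i) u) + 1 with hM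
  set l : ι → (Pt d →ₗ[ℝ] ℝ) := fun i => S.w i - M i • S.w (j i) with hl
  set M' : κ → ℝ := fun k => max 0 ((- T.w k u) / (- T.w (j' k) u)) + 1 with hM'
  set l' : κ → (Pt d →ₗ[ℝ] ℝ) := fun k => T.w k - M' k • T.w (j' k) with hl'
  have hlapp : ∀ i x, l i x = S.w i x - M i * S.w (j i) x := by
    intro i x
    simp [hl, LinearMap.sub_apply, LinearMap.smul_apply, smul_eq_mul]
  have hl'app : ∀ k x, l' k x = T.w k x - M' k * T.w (j' k) x := by
    intro k x
    simp [hl', LinearMap.sub_apply, LinearMap.smul_apply, smul_eq_mul]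
  have hM0 : ∀ i, 0 ≤ M i := by
    intro i
    have := le_max_left (0:ℝ) (S.w i u / S.w (j i) u)
    simp only [hM]; linarith
  have hM'0 : ∀ k, 0 ≤ M' k := by
    intro k
    have := le_max_left (0:ℝ) ((- T.w k u) / (- T.w (j' k) u))
    simp only [hM']; linarith
  have hlu : ∀ i, l i u < 0 := by
    intro i
    have hpos := hjpos i
    have hgt : S.w i u / S.w (j i) u < M i := by
      have := le_max_right (0:ℝ) (S.w i u / S.w (j i) u)
      simp only [hM]; linarith
    have h1 : S.w i u < M i * S.w (j i) u := (div_lt_iff₀ hpos).1 hgt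
    rw [hlapp]
    linarith
  have hl'u : ∀ k, 0 < l' k u := by
    intro k
    have hneg := hjneg k
    have ha : 0 < - T.w (j' k) u := by linarith
    have hgt : (- T.w k u) / (- T.w (j' k) u) < M' k := by
      have := le_max_right (0:ℝ) ((- T.w k u) / (- T.w (j' k) u))
      simp only [hM']; linarith
    have h1 : - T.w k u < M' k * (- T.w (j' k) u) := (div_lt_iff₀ ha).1 hgt
    rw [hl'app]
    nlinarith
  have hlp : ∀ i m, m ≠ i → l i (S.p m) < l i (S.p i) := by
    intro i m hmi
    have e1 : S.w i (S.p i) = 1 - S.c i := by have := S.dual1 i; linarith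
    have e2 : S.w i (S.p m) = - S.c i := by have := S.dual0 i m (Ne.symm hmi); linarith
    have e3 : S.w (j i) (S.p i) = - S.c (j i) := by have := S.dual0 (j i) i (hj i); linarith
    rw [hlapp, hlapp, e1, e2, e3]
    by_cases hjm : j i = m
    · have e4 : S.w (j i) (S.p m) = 1 - S.c (j i) := by
        have := S.dual1 (j i)
        rw [hjm] at this ⊢
        linarith
      rw [e4]
      have := hM0 i
      nlinarith
    · have e4 : S.w (j i) (S.p m) = - S.c (j i) := by have := S.dual0 (j i) m hjm; linarith
      rw [e4]
      linarith
  have hl'p : ∀ k m, m ≠ k → l' k (T.p m) < l' k (T.p k) := by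
    intro k m hmk
    have e1 : T.w k (T.p k) = 1 - T.c k := by have := T.dual1 k; linarith
    have e2 : T.w k (T.p m) = - T.c k := by have := T.dual0 k m (Ne.symm hmk); linarith
    have e3 : T.w (j' k) (T.p k) = - T.c (j' k) := by have := T.dual0 (j' k) k (hj' k); linarith
    rw [hl'app, hl'app, e1, e2, e3]
    by_cases hjm : j' k = m
    · have e4 : T.w (j' k) (T.p m) = 1 - T.c (j' k) := by
        have := T.dual1 (j' k)
        rw [hjm] at this ⊢
        linarith
      rw [e4]
      have := hM'0 k
      nlinarith
    · have e4 : T.w (j' k) (T.p m) = - T.c (j' k) := by have := T.dual0 (j' k) m hjm; linarith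
      rw [e4]
      linarith
  have hev1 : ∀ᶠ R in atTop, ∀ i, ∀ m : κ, R * (l i u) + (l i (T.p m) - l i (S.p i)) < 0 := by
    rw [eventually_all]
    intro i
    rw [eventually_all]
    intro m
    exact eventually_lt_zero (hlu i)
  have hev2 : ∀ᶠ R in atTop, ∀ k, ∀ m : ι,
      0 < R * (l' k u) + (l' k (T.p k) - l' k (S.p m)) := by
    rw [eventually_all]
    intro k
    rw [eventually_all]
    intro m
    exact eventually_gt_zero (hl'u k)
  filter_upwards [hev1, hev2] with R h1 h2
  set q : κ → Pt d := (T.translate (R • u)).p with hq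
  have hqval : ∀ k, q k = R • u + T.p k := fun k => rfl
  have hlq : ∀ (i : ι) (m : κ), l i (q m) = R * (l i u) + l i (T.p m) := by
    intro i m
    rw [hqval, map_add, map_smul, smul_eq_mul]
  have hl'q : ∀ (k m : κ), l' k (q m) = R * (l' k u) + l' k (T.p m) := by
    intro k m
    rw [hqval, map_add, map_smul, smul_eq_mul]
  set X : Set (Pt d) := Set.range S.p ∪ Set.range q with hX
  have hXfin : X.Finite := (Set.finite_range S.p).union (Set.finite_range q)
  have hpos : ∀ x ∈ X, x ∉ convexHull ℝ (X \ {x}) := by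
    rintro x (⟨i, rfl⟩ | ⟨k, rfl⟩)
    · apply not_mem_convexHull_of_sep (l := l i)
      rintro y ⟨(⟨m, rfl⟩ | ⟨m, rfl⟩), hy2⟩
      · have hmi : m ≠ i := by
          intro he; exact hy2 (by rw [he]; exact Set.mem_singleton _)
        exact hlp i m hmi
      · rw [hlq]
        have := h1 i m
        linarith
    · apply not_mem_convexHull_of_sep (l := l' k)
      rintro y ⟨(⟨m, rfl⟩ | ⟨m, rfl⟩), hy2⟩
      · rw [hl'q]
        have := h2 k m
        linarith
      · have hmk : m ≠ k := by
          intro he; exact hy2 (by rw [he]; exact Set.mem_singleton _)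
        rw [hl'q, hl'q]
        have := hl'p k m hmk
        linarith
  have r1 : Rel d (convexHull ℝ (Set.range S.p)) (convexHull ℝ X) :=
    rel_mono hXfin hpos _ _ Set.subset_union_left rfl S.span
  have r2 : Rel d (convexHull ℝ (Set.range q)) (convexHull ℝ X) :=
    rel_mono hXfin hpos _ _ Set.subset_union_right rfl (T.translate (R • u)).span
  exact rel_trans r1 (rel_symm r2)

end Stmt2
namespace Stmt2

open Filter

variable {d : ℕ} {ι : Type}

lemma Spx.sum_w_apply [Fintype ι] (S : Spx d ι) (u : Pt d) : ∑ k, S.w k u = 0 := by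
  have h : (∑ k, S.w k) u = (0 : Pt d →ₗ[ℝ] ℝ) u := by rw [S.sum_w]
  rw [LinearMap.sum_apply] at h
  simpa using h

lemma Spx.dichotomy [Fintype ι] (hcard : 3 ≤ Fintype.card ι) (S : Spx d ι)
    (u : Pt d) (hnz : ∀ k, S.w k u ≠ 0) :
    (∀ i, ∃ j, j ≠ i ∧ 0 < S.w j u) ∨ (∀ i, ∃ j, j ≠ i ∧ S.w j u < 0) :=
  sign_split hcard (fun k => S.w k u) (S.sum_w_apply u) hnz

lemma Spx.w_ne_zero' [Fintype ι] (hcard : 3 ≤ Fintype.card ι) (S : Spx d ι) (k : ι) :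
    S.w k ≠ 0 := by
  obtain ⟨m, _, hmk⟩ := Finset.exists_mem_ne (s := (Finset.univ : Finset ι))
    (by rw [Finset.card_univ]; omega) k
  exact S.w_ne_zero k hmk

/-- a polytope is connected to any of its translates -/
lemma rel_translate [Fintype ι] (hcard : 3 ≤ Fintype.card ι) (S : Spx d ι) (z : Pt d) :
    Rel d (convexHull ℝ (Set.range S.p)) (convexHull ℝ (Set.range ((S.translate z).p))) := by
  classical
  obtain ⟨u0, hu0⟩ := exists_good_u (Finset.univ.image S.w) (by
    rintro g hg
    obtain ⟨k, _, rfl⟩ := Finset.mem_image.1 hg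
    exact S.w_ne_zero' hcard k)
  have hnz : ∀ k, S.w k u0 ≠ 0 := fun k =>
    hu0 _ (Finset.mem_image.2 ⟨k, Finset.mem_univ k, rfl⟩)
  obtain ⟨u, hu1⟩ : ∃ u, ∀ i, ∃ j, j ≠ i ∧ 0 < S.w j u := by
    rcases S.dichotomy hcard u0 hnz with h | h
    · exact ⟨u0, h⟩
    · refine ⟨-u0, fun i => ?_⟩
      obtain ⟨j, hj1, hj2⟩ := h i
      exact ⟨j, hj1, by rw [map_neg]; linarith⟩
  have hu2 : ∀ i, ∃ j, j ≠ i ∧ (S.reflect 0).w j u < 0 := by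
    intro i
    obtain ⟨j, hj1, hj2⟩ := hu1 i
    refine ⟨j, hj1, ?_⟩
    show (-(S.w j)) u < 0
    rw [LinearMap.neg_apply]
    linarith
  have hu1' : ∀ i, ∃ j, j ≠ i ∧ 0 < (S.translate z).w j u := hu1
  have l1 := link S (S.reflect 0) u hu1 hu2
  have l2 := link (S.translate z) (S.reflect 0) u hu1' hu2
  obtain ⟨R, hR1, hR2⟩ := (l1.and l2).exists
  exact rel_trans hR1 (rel_symm hR2)

/-- any two simplices are connected -/
lemma rel_simplex {ι κ : Type} [Fintype ι] [Fintype κ] (hι : 3 ≤ Fintype.card ι)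
    (hκ : 3 ≤ Fintype.card κ) (S : Spx d ι) (T : Spx d κ) :
    Rel d (convexHull ℝ (Set.range S.p)) (convexHull ℝ (Set.range T.p)) := by
  classical
  obtain ⟨u, hu⟩ := exists_good_u ((Finset.univ.image S.w) ∪ (Finset.univ.image T.w)) (by
    rintro g hg
    rcases Finset.mem_union.1 hg with h | h
    · obtain ⟨k, _, rfl⟩ := Finset.mem_image.1 h
      exact S.w_ne_zero' hι k
    · obtain ⟨k, _, rfl⟩ := Finset.mem_image.1 h
      exact T.w_ne_zero' hκ k)
  have hnzS : ∀ k, S.w k u ≠ 0 := fun k =>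
    hu _ (Finset.mem_union_left _ (Finset.mem_image.2 ⟨k, Finset.mem_univ k, rfl⟩))
  have hnzT : ∀ k, T.w k u ≠ 0 := fun k =>
    hu _ (Finset.mem_union_right _ (Finset.mem_image.2 ⟨k, Finset.mem_univ k, rfl⟩))
  -- normalize the S side so that `u` has two positive coordinates
  obtain ⟨S1, hS1rel, hS1u⟩ : ∃ S1 : Spx d ι,
      Rel d (convexHull ℝ (Set.range S.p)) (convexHull ℝ (Set.range S1.p)) ∧
        ∀ i, ∃ j, j ≠ i ∧ 0 < S1.w j u := by
    rcases S.dichotomy hι u hnzS with h | h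
    · exact ⟨S, rel_refl (convexHull_mem_gamma (Set.finite_range S.p) S.span), h⟩
    · have hu1 : ∀ i, ∃ j, j ≠ i ∧ 0 < S.w j (-u) := by
        intro i
        obtain ⟨j, hj1, hj2⟩ := h i
        exact ⟨j, hj1, by rw [map_neg]; linarith⟩
      have hu2 : ∀ i, ∃ j, j ≠ i ∧ (S.reflect 0).w j (-u) < 0 := by
        intro i
        obtain ⟨j, hj1, hj2⟩ := h i
        refine ⟨j, hj1, ?_⟩
        show (-(S.w j)) (-u) < 0
        rw [LinearMap.neg_apply, map_neg]
        linarith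
      obtain ⟨R, hR⟩ := (link S (S.reflect 0) (-u) hu1 hu2).exists
      refine ⟨(S.reflect 0).translate (R • -u), hR, ?_⟩
      intro i
      obtain ⟨j, hj1, hj2⟩ := h i
      refine ⟨j, hj1, ?_⟩
      show 0 < (-(S.w j)) u
      rw [LinearMap.neg_apply]
      linarith
  -- normalize the T side so that `u` has two negative coordinates
  obtain ⟨T1, hT1rel, hT1u⟩ : ∃ T1 : Spx d κ,
      Rel d (convexHull ℝ (Set.range T.p)) (convexHull ℝ (Set.range T1.p)) ∧
        ∀ i, ∃ j, j ≠ i ∧ T1.w j u < 0 := by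
    rcases T.dichotomy hκ u hnzT with h | h
    · have hu2 : ∀ i, ∃ j, j ≠ i ∧ (T.reflect 0).w j u < 0 := by
        intro i
        obtain ⟨j, hj1, hj2⟩ := h i
        refine ⟨j, hj1, ?_⟩
        show (-(T.w j)) u < 0
        rw [LinearMap.neg_apply]
        linarith
      obtain ⟨R, hR⟩ := (link T (T.reflect 0) u h hu2).exists
      refine ⟨(T.reflect 0).translate (R • u), hR, ?_⟩
      intro i
      obtain ⟨j, hj1, hj2⟩ := h i
      refine ⟨j, hj1, ?_⟩
      show (-(T.w j)) u < 0
      rw [LinearMap.neg_apply]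
      linarith
    · exact ⟨T, rel_refl (convexHull_mem_gamma (Set.finite_range T.p) T.span), h⟩
  -- middle link
  obtain ⟨R, hmid⟩ := (link S1 T1 u hS1u hT1u).exists
  have htr := rel_translate hκ T1 (R • u)
  exact rel_trans hS1rel (rel_trans hmid (rel_symm (rel_trans hT1rel htr)))

/-- hulls of affinely independent spanning sets are connected -/
lemma rel_conv_ind (hd : 2 ≤ d) {t s : Set (Pt d)} (htf : t.Finite)
    (hts : affineSpan ℝ t = ⊤) (hti : AffineIndependent ℝ ((↑) : t → Pt d))
    (hsf : s.Finite) (hss : affineSpan ℝ s = ⊤)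
    (hsi : AffineIndependent ℝ ((↑) : s → Pt d)) :
    Rel d (convexHull ℝ t) (convexHull ℝ s) := by
  classical
  haveI : Fintype ↥t := htf.fintype
  haveI : Fintype ↥s := hsf.fintype
  have htspan : affineSpan ℝ (Set.range ((↑) : t → Pt d)) = ⊤ := by
    rwa [Subtype.range_coe]
  have hsspan : affineSpan ℝ (Set.range ((↑) : s → Pt d)) = ⊤ := by
    rwa [Subtype.range_coe]
  let bt : AffineBasis ↥t ℝ (Pt d) := ⟨(↑), hti, htspan⟩
  let bs : AffineBasis ↥s ℝ (Pt d) := ⟨(↑), hsi, hsspan⟩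
  have hfr : Module.finrank ℝ (Pt d) = d := by
    rw [Module.finrank_pi]
    exact Fintype.card_fin d
  have hcardt : 3 ≤ Fintype.card ↥t := by
    have h := (hti.affineSpan_eq_top_iff_card_eq_finrank_add_one).1 htspan
    rw [hfr] at h
    rw [h]
    omega
  have hcards : 3 ≤ Fintype.card ↥s := by
    have h := (hsi.affineSpan_eq_top_iff_card_eq_finrank_add_one).1 hsspan
    rw [hfr] at h
    rw [h]
    omega
  have hdecomp : ∀ (f : Pt d →ᵃ[ℝ] ℝ) (x : Pt d), f x = f.linear x + f 0 := by
    intro f x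
    have := AffineMap.decomp f
    have h2 := congrFun this x
    simpa using h2
  let S : Spx d ↥t :=
    { p := (↑)
      w := fun k => (bt.coord k).linear
      c := fun k => bt.coord k 0
      dual1 := fun k => by
        rw [← hdecomp (bt.coord k) k]
        exact bt.coord_apply_eq k
      dual0 := fun k m hkm => by
        rw [← hdecomp (bt.coord k) m]
        exact bt.coord_apply_ne hkm
      span := htspan }
  let T : Spx d ↥s :=
    { p := (↑)
      w := fun k => (bs.coord k).linear
      c := fun k => bs.coord k 0
      dual1 := fun k => by
        rw [← hdecomp (bs.coord k) k]
        exact bs.coord_apply_eq k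
      dual0 := fun k m hkm => by
        rw [← hdecomp (bs.coord k) m]
        exact bs.coord_apply_ne hkm
      span := hsspan }
  have h := rel_simplex hcardt hcards S T
  have hrt : Set.range S.p = t := Subtype.range_coe
  have hrs : Set.range T.p = s := Subtype.range_coe
  rwa [hrt, hrs] at h

end Stmt2
/-- the graph `Γ(d)` is connected. -/
theorem stmt_2 (d : ℕ) (hd : 2 ≤ d) : ConnectedIn d (Gamma d) := by
  intro P hP Q hQ
  obtain ⟨t, htf, hts, hti, hPt⟩ := Stmt2.rel_descent hP
  obtain ⟨s, hsf, hss, hsi, hQs⟩ := Stmt2.rel_descent hQ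
  have hmid := Stmt2.rel_conv_ind hd htf hts hti hsf hss hsi
  obtain ⟨n, hn⟩ := Stmt2.rel_trans hPt (Stmt2.rel_trans hmid (Stmt2.rel_symm hQs))
  exact ⟨n, hn⟩
end

section
/- Let A be a subset of ℝ^d in convex position whose affine hull is all of ℝ^d. For any n ≥ d+1, the d-dimensional polytopes with n or n+1 vertices whose vertex sets are subsets of A induce a connected subgraph of Γ(d) of diameter at most 2n+2; moreover, any two such polytopes having exactly n vertices each are at distance at most 2n in this subgraph. -/
open Set

/-- The class of `d`-dimensional polytopes with `n` or `n+1` vertices, all of whose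
vertices belong to `A`. -/
def AClass (d n : ℕ) (A : Set (Pt d)) : Set (Set (Pt d)) :=
  {P ∈ Gamma d | Set.extremePoints ℝ P ⊆ A ∧ (nVerts d P = n ∨ nVerts d P = n + 1)}

lemma aux_exchange {d : ℕ} {s : Set (Pt d)} {a b : Pt d} (hs : s.Nonempty)
    (h : affineSpan ℝ (insert a s) = ⊤) (hb : b ∉ affineSpan ℝ s) :
    affineSpan ℝ (insert b s) = ⊤ := by
  obtain ⟨p1, hp1⟩ := hs
  have hp1' : p1 ∈ affineSpan ℝ s := subset_affineSpan ℝ s hp1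
  have hbtop : b ∈ affineSpan ℝ (insert a (affineSpan ℝ s : Set (Pt d))) := by
    rw [affineSpan_insert_affineSpan, h]; trivial
  obtain ⟨r, p0, hp0, hbeq⟩ := (AffineSubspace.mem_affineSpan_insert_iff hp1' a b).mp hbtop
  have hr : r ≠ 0 := by
    rintro rfl
    simp only [zero_smul, zero_vadd] at hbeq
    exact hb (hbeq ▸ hp0)
  -- a = r⁻¹ • (b -ᵥ p0) +ᵥ p1
  have ha : a = r⁻¹ • (b -ᵥ p0) +ᵥ p1 := by
    have : b -ᵥ p0 = r • (a -ᵥ p1) := by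
      rw [hbeq]; simp
    rw [this, smul_smul, inv_mul_cancel₀ hr, one_smul]
    simp
  have hsub : affineSpan ℝ (insert a s) ≤ affineSpan ℝ (insert b s) := by
    apply affineSpan_le.mpr
    intro x hx
    rcases hx with rfl | hx
    · rw [ha]
      exact AffineSubspace.smul_vsub_vadd_mem _ r⁻¹
        (subset_affineSpan ℝ _ (Set.mem_insert _ _))
        (affineSpan_mono ℝ (Set.subset_insert b s) hp0)
        (subset_affineSpan ℝ _ (Set.mem_insert_of_mem _ hp1))
    · exact subset_affineSpan ℝ _ (Set.mem_insert_of_mem _ hx)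
  rw [h] at hsub
  exact top_le_iff.mp hsub
section Aux
variable {d : ℕ} {A : Set (Pt d)}

lemma mem_AClass (hA : ConvexPosition d A) {n : ℕ} {S : Finset (Pt d)} (hS : ↑S ⊆ A)
    (hfd : affineSpan ℝ (S : Set (Pt d)) = ⊤) (hcard : S.card = n ∨ S.card = n + 1) :
    convexHull ℝ (S : Set (Pt d)) ∈ AClass d n A := by
  refine ⟨⟨⟨S, rfl⟩, ?_⟩, ?_, ?_⟩
  · unfold FullDim; rw [affineSpan_convexHull]; exact hfd
  · rw [hA S hS]; exact hS
  · unfold nVerts; rw [hA S hS, Set.ncard_coe_finset]; exact hcard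

lemma insert_move (hA : ConvexPosition d A) {S : Finset (Pt d)} (hS : ↑S ⊆ A)
    {x : Pt d} (hx : x ∈ A) :
    InsertMove d (convexHull ℝ (S : Set (Pt d)))
      (convexHull ℝ ((insert x S : Finset (Pt d)) : Set (Pt d))) := by
  have hxs : ((insert x S : Finset (Pt d)) : Set (Pt d)) ⊆ A := by
    rw [Finset.coe_insert]; exact Set.insert_subset hx hS
  have key : convexHull ℝ (convexHull ℝ (S : Set (Pt d)) ∪ {x})
      = convexHull ℝ ((insert x S : Finset (Pt d)) : Set (Pt d)) := by
    rw [convexHull_convexHull_union_left, Finset.coe_insert, Set.union_singleton]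
  refine ⟨x, ?_, key.symm⟩
  unfold CanInsert
  rw [key, hA _ hxs, hA S hS, Finset.coe_insert, Set.union_singleton]

lemma delete_move (hA : ConvexPosition d A) {S : Finset (Pt d)} (hS : ↑S ⊆ A)
    {v : Pt d} (hv : v ∈ S)
    (hfd : affineSpan ℝ ((S.erase v : Finset (Pt d)) : Set (Pt d)) = ⊤) :
    DeleteMove d (convexHull ℝ (S : Set (Pt d)))
      (convexHull ℝ ((S.erase v : Finset (Pt d)) : Set (Pt d))) := by
  refine ⟨v, ⟨?_, ?_⟩, ?_⟩
  · rw [hA S hS]; exact_mod_cast hv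
  · unfold FullDim
    rw [hA S hS, ← Finset.coe_erase, affineSpan_convexHull]; exact hfd
  · rw [hA S hS, ← Finset.coe_erase]

lemma swap_exists {U V : Finset (Pt d)}
    (hUfd : affineSpan ℝ (U : Set (Pt d)) = ⊤)
    (hVfd : affineSpan ℝ (V : Set (Pt d)) = ⊤) {u : Pt d} (hu : u ∈ U) (huV : u ∉ V)
    (hVU : (V \ U).Nonempty) (hU2 : 2 ≤ U.card) :
    ∃ w ∈ V, w ∉ U ∧
      affineSpan ℝ ((insert w (U.erase u) : Finset (Pt d)) : Set (Pt d)) = ⊤ := by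
  by_cases h : affineSpan ℝ ((U.erase u : Finset (Pt d)) : Set (Pt d)) = ⊤
  · obtain ⟨w, hw⟩ := hVU
    rw [Finset.mem_sdiff] at hw
    refine ⟨w, hw.1, hw.2, ?_⟩
    have := affineSpan_mono ℝ (show ((U.erase u : Finset (Pt d)) : Set (Pt d)) ⊆
      ((insert w (U.erase u) : Finset (Pt d)) : Set (Pt d)) by
        rw [Finset.coe_insert]; exact Set.subset_insert _ _)
    rw [h] at this
    exact top_le_iff.mp this
  · have hex : ∃ w ∈ V, w ∉ affineSpan ℝ ((U.erase u : Finset (Pt d)) : Set (Pt d)) := by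
      by_contra hc
      push_neg at hc
      have : affineSpan ℝ (V : Set (Pt d)) ≤
          affineSpan ℝ ((U.erase u : Finset (Pt d)) : Set (Pt d)) :=
        affineSpan_le.mpr fun x hx => hc x hx
      rw [hVfd] at this
      exact h (top_le_iff.mp this)
    obtain ⟨w, hwV, hw⟩ := hex
    have hwU : w ∉ U := by
      intro hwU
      have hne : w ≠ u := fun he => huV (he ▸ hwV)
      exact hw (subset_affineSpan ℝ _ (by
        rw [Finset.coe_erase]; exact ⟨hwU, hne⟩))
    have hne : ((U.erase u : Finset (Pt d)) : Set (Pt d)).Nonempty := by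
      rw [Finset.coe_nonempty, ← Finset.card_pos, Finset.card_erase_of_mem hu]
      omega
    have htop : affineSpan ℝ (insert u ((U.erase u : Finset (Pt d)) : Set (Pt d))) = ⊤ := by
      rw [← Finset.coe_insert, Finset.insert_erase hu]; exact hUfd
    have := aux_exchange hne htop hw
    rw [← Finset.coe_insert] at this
    exact ⟨w, hwV, hwU, this⟩

end Aux
section Paths
variable {d : ℕ} {C : Set (Set (Pt d))} {P Q R : Set (Pt d)}

lemma path_refl (hP : P ∈ C) : PathLE d C P P 0 :=
  ⟨0, fun _ => P, le_refl _, rfl, rfl, fun _ _ => hP, fun i h => absurd h (Nat.not_lt_zero i)⟩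

lemma path_mono {a b : ℕ} (h : PathLE d C P Q a) (hab : a ≤ b) : PathLE d C P Q b := by
  obtain ⟨m, f, hm, h0, hM, hC, hmove⟩ := h
  exact ⟨m, f, hm.trans hab, h0, hM, hC, hmove⟩

lemma move_symm (h : Move d P Q) : Move d Q P := by
  rcases h with h | h | h | h
  · exact Or.inr (Or.inr (Or.inl h))
  · exact Or.inr (Or.inr (Or.inr h))
  · exact Or.inl h
  · exact Or.inr (Or.inl h)

lemma path_single (hP : P ∈ C) (hQ : Q ∈ C) (h : Move d P Q) : PathLE d C P Q 1 := by
  refine ⟨1, fun i => if i = 0 then P else Q, le_refl _, by simp, by simp, ?_, ?_⟩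
  · intro i _
    by_cases h0 : i = 0 <;> simp [h0, hP, hQ]
  · intro i hi
    have : i = 0 := by omega
    subst this
    simpa using h

lemma path_trans {a b : ℕ} (h1 : PathLE d C P Q a) (h2 : PathLE d C Q R b) :
    PathLE d C P R (a + b) := by
  obtain ⟨m1, f, hm1, hf0, hfm, hfC, hfmove⟩ := h1
  obtain ⟨m2, g, hm2, hg0, hgm, hgC, hgmove⟩ := h2
  refine ⟨m1 + m2, fun i => if i ≤ m1 then f i else g (i - m1), by omega, ?_, ?_, ?_, ?_⟩
  · simp [Nat.zero_le, hf0]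
  · by_cases h : m1 + m2 ≤ m1
    · have hm2z : m2 = 0 := by omega
      simp only [if_pos h]
      rw [show m1 + m2 = m1 by omega, hfm, ← hg0, show (0:ℕ) = m2 from hm2z.symm]
      exact hgm
    · simp only [if_neg h]
      rw [show m1 + m2 - m1 = m2 by omega, hgm]
  · intro i hi
    by_cases h : i ≤ m1
    · simp only [if_pos h]; exact hfC i h
    · simp only [if_neg h]; exact hgC (i - m1) (by omega)
  · intro i hi
    by_cases h1' : i + 1 ≤ m1
    · simp only [if_pos h1', if_pos (by omega : i ≤ m1)]
      exact hfmove i (by omega)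
    · by_cases h2' : i ≤ m1
      · have hieq : i = m1 := by omega
        simp only [if_pos h2', if_neg h1']
        rw [show i + 1 - m1 = 1 by omega, hieq, hfm, ← hg0]
        exact hgmove 0 (by omega)
      · simp only [if_neg h2', if_neg h1']
        rw [show i + 1 - m1 = (i - m1) + 1 by omega]
        exact hgmove (i - m1) (by omega)

end Paths
section Swap
variable {d : ℕ} {A : Set (Pt d)}

lemma path_swap (hA : ConvexPosition d A) {n : ℕ} (hn : 3 ≤ n) :
    ∀ k : ℕ, ∀ U V : Finset (Pt d), ↑U ⊆ A → ↑V ⊆ A →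
      affineSpan ℝ (U : Set (Pt d)) = ⊤ → affineSpan ℝ (V : Set (Pt d)) = ⊤ →
      U.card = n → V.card = n → (V \ U).card ≤ k →
      PathLE d (AClass d n A) (convexHull ℝ (U : Set (Pt d)))
        (convexHull ℝ (V : Set (Pt d))) (2 * k) := by
  intro k
  induction k with
  | zero =>
    intro U V hU hV hUfd hVfd hUc hVc hk
    have hVU : V ⊆ U := Finset.sdiff_eq_empty_iff_subset.mp
      (Finset.card_eq_zero.mp (Nat.le_zero.mp hk))
    have hEq : V = U := Finset.eq_of_subset_of_card_le hVU (by omega)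
    rw [hEq]
    exact path_refl (mem_AClass hA hU hUfd (Or.inl hUc))
  | succ k ih =>
    intro U V hU hV hUfd hVfd hUc hVc hk
    by_cases hUV : U = V
    · rw [hUV]
      exact path_mono (path_refl (mem_AClass hA hV hVfd (Or.inl hVc))) (by omega)
    · have hUVne : (U \ V).Nonempty := by
        rw [Finset.sdiff_nonempty]
        intro hsub
        exact hUV (Finset.eq_of_subset_of_card_le hsub (by omega))
      have hVUne : (V \ U).Nonempty := by
        rw [Finset.sdiff_nonempty]
        intro hsub
        exact hUV (Finset.eq_of_subset_of_card_le hsub (by omega)).symm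
      obtain ⟨u, hu⟩ := hUVne
      rw [Finset.mem_sdiff] at hu
      obtain ⟨w, hwV, hwU, hspan⟩ := swap_exists hUfd hVfd hu.1 hu.2 hVUne (by omega)
      set U1 : Finset (Pt d) := insert w U with hU1
      set U2 : Finset (Pt d) := insert w (U.erase u) with hU2
      have hU1A : (U1 : Set (Pt d)) ⊆ A := by
        rw [hU1, Finset.coe_insert]
        exact Set.insert_subset (hV hwV) hU
      have hU2A : (U2 : Set (Pt d)) ⊆ A := by
        rw [hU2, Finset.coe_insert]
        exact Set.insert_subset (hV hwV)
          (fun x hx => hU (Finset.mem_coe.mpr (Finset.mem_of_mem_erase (Finset.mem_coe.mp hx))))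
      have hU1fd : affineSpan ℝ (U1 : Set (Pt d)) = ⊤ := by
        have := affineSpan_mono ℝ (show (U : Set (Pt d)) ⊆ (U1 : Set (Pt d)) by
          rw [hU1, Finset.coe_insert]; exact Set.subset_insert _ _)
        rw [hUfd] at this
        exact top_le_iff.mp this
      have hU1c : U1.card = n + 1 := by
        rw [hU1, Finset.card_insert_of_notMem hwU, hUc]
      have hU2c : U2.card = n := by
        rw [hU2, Finset.card_insert_of_notMem (fun h => hwU (Finset.mem_of_mem_erase h)),
          Finset.card_erase_of_mem hu.1, hUc]
        omega
      have hU1erase : U1.erase u = U2 := by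
        rw [hU1, hU2, Finset.erase_insert_of_ne (by rintro rfl; exact hwU hu.1)]
      -- memberships
      have hPU : convexHull ℝ (U : Set (Pt d)) ∈ AClass d n A :=
        mem_AClass hA hU hUfd (Or.inl hUc)
      have hPU1 : convexHull ℝ (U1 : Set (Pt d)) ∈ AClass d n A :=
        mem_AClass hA hU1A hU1fd (Or.inr hU1c)
      have hPU2 : convexHull ℝ (U2 : Set (Pt d)) ∈ AClass d n A :=
        mem_AClass hA hU2A hspan (Or.inl hU2c)
      -- moves
      have hmv1 : Move d (convexHull ℝ (U : Set (Pt d))) (convexHull ℝ (U1 : Set (Pt d))) :=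
        Or.inl (insert_move hA hU (hV hwV))
      have hmv2 : Move d (convexHull ℝ (U1 : Set (Pt d))) (convexHull ℝ (U2 : Set (Pt d))) := by
        have : DeleteMove d (convexHull ℝ (U1 : Set (Pt d)))
            (convexHull ℝ ((U1.erase u : Finset (Pt d)) : Set (Pt d))) :=
          delete_move hA hU1A (by rw [hU1]; exact Finset.mem_insert_of_mem hu.1)
            (by rw [hU1erase]; exact hspan)
        rw [hU1erase] at this
        exact Or.inr (Or.inl this)
      -- induction step
      have hVU2 : (V \ U2).card ≤ k := by
        have hsub : V \ U2 ⊆ (V \ U).erase w := by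
          intro x hx
          rw [Finset.mem_sdiff] at hx
          rw [Finset.mem_erase, Finset.mem_sdiff]
          have hxw : x ≠ w := fun h => hx.2 (h ▸ (by rw [hU2]; exact Finset.mem_insert_self _ _))
          refine ⟨hxw, hx.1, fun hxU => hx.2 ?_⟩
          rw [hU2]
          exact Finset.mem_insert_of_mem (Finset.mem_erase.mpr
            ⟨fun h => hu.2 (h ▸ hx.1), hxU⟩)
        have h1 := Finset.card_le_card hsub
        have h2 : ((V \ U).erase w).card = (V \ U).card - 1 :=
          Finset.card_erase_of_mem (Finset.mem_sdiff.mpr ⟨hwV, hwU⟩)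
        have h3 : 1 ≤ (V \ U).card := Finset.card_pos.mpr hVUne
        omega
      have hrest := ih U2 V hU2A hV hspan hVfd hU2c hVc hVU2
      have := path_trans (path_single hPU hPU1 hmv1) (path_trans (path_single hPU1 hPU2 hmv2) hrest)
      exact path_mono this (by omega)

end Swap
section Extract
variable {d : ℕ} {A : Set (Pt d)}

lemma exists_finset (hA : ConvexPosition d A) {n : ℕ} {P : Set (Pt d)}
    (hP : P ∈ AClass d n A) :
    ∃ S : Finset (Pt d), ↑S ⊆ A ∧ affineSpan ℝ (S : Set (Pt d)) = ⊤ ∧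
      S.card = nVerts d P ∧ P = convexHull ℝ (S : Set (Pt d)) := by
  obtain ⟨⟨⟨S0, rfl⟩, hfd⟩, hsubA, _⟩ := hP
  unfold FullDim at hfd
  set T := Set.extremePoints ℝ (convexHull ℝ (S0 : Set (Pt d))) with hT
  have hTfin : T.Finite := S0.finite_toSet.subset extremePoints_convexHull_subset
  have hPT : convexHull ℝ T = convexHull ℝ (S0 : Set (Pt d)) := by
    have hcpt : IsCompact (convexHull ℝ (S0 : Set (Pt d))) :=
      S0.finite_toSet.isCompact_convexHull ℝ
    have hKM := closure_convexHull_extremePoints hcpt (convex_convexHull ℝ _)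
    rwa [(hTfin.isClosed_convexHull ℝ).closure_eq] at hKM
  refine ⟨hTfin.toFinset, ?_, ?_, ?_, ?_⟩
  · rw [Set.Finite.coe_toFinset]; exact hsubA
  · rw [Set.Finite.coe_toFinset]
    have h2 : affineSpan ℝ (convexHull ℝ T) = ⊤ := by rw [hPT]; exact hfd
    rwa [affineSpan_convexHull] at h2
  · show hTfin.toFinset.card = (Set.extremePoints ℝ (convexHull ℝ (S0 : Set (Pt d)))).ncard
    rw [← hT, Set.ncard_eq_toFinset_card T hTfin]
  · rw [Set.Finite.coe_toFinset]; exact hPT.symm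

lemma reduce {S : Finset (Pt d)} (hfd : affineSpan ℝ (S : Set (Pt d)) = ⊤)
    (hcard : d + 2 ≤ S.card) :
    ∃ u ∈ S, affineSpan ℝ ((S.erase u : Finset (Pt d)) : Set (Pt d)) = ⊤ := by
  obtain ⟨t, htS, htspan, htind⟩ := exists_affineIndependent ℝ (Pt d) (S : Set (Pt d))
  have htfin : t.Finite := S.finite_toSet.subset htS
  haveI := htfin.fintype
  have hcardt : t.ncard ≤ d + 1 := by
    have h1 : Fintype.card t ≤
        Module.finrank ℝ ↥(vectorSpan ℝ (Set.range ((↑) : t → Pt d))) + 1 :=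
      htind.card_le_finrank_succ
    have h2 : Module.finrank ℝ ↥(vectorSpan ℝ (Set.range ((↑) : t → Pt d))) ≤ d := by
      have h3 := Submodule.finrank_le (vectorSpan ℝ (Set.range ((↑) : t → Pt d)))
      rwa [Module.finrank_fin_fun] at h3
    have h3 : t.ncard = Fintype.card t := by
      rw [← Nat.card_coe_set_eq, Nat.card_eq_fintype_card]
    omega
  have hnot : ¬ (S : Set (Pt d)) ⊆ t := by
    intro h
    have := Set.ncard_le_ncard h htfin
    rw [Set.ncard_coe_finset] at this
    omega
  obtain ⟨u, huS, hut⟩ := Set.not_subset.mp hnot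
  refine ⟨u, Finset.mem_coe.mp huS, ?_⟩
  have hsub : t ⊆ ((S.erase u : Finset (Pt d)) : Set (Pt d)) := by
    intro x hx
    rw [Finset.coe_erase]
    refine ⟨htS hx, ?_⟩
    simp only [Set.mem_singleton_iff]
    exact fun hxu => hut (hxu ▸ hx)
  have hle := affineSpan_mono ℝ hsub
  rw [htspan, hfd] at hle
  exact top_le_iff.mp hle

lemma path_to_n (hA : ConvexPosition d A) {n : ℕ} (hd2 : 2 ≤ d) (hn : d + 1 ≤ n)
    {P : Set (Pt d)} (hP : P ∈ AClass d n A) :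
    ∃ U : Finset (Pt d), ↑U ⊆ A ∧ affineSpan ℝ (U : Set (Pt d)) = ⊤ ∧ U.card = n ∧
      PathLE d (AClass d n A) P (convexHull ℝ (U : Set (Pt d))) 1 ∧
      PathLE d (AClass d n A) (convexHull ℝ (U : Set (Pt d))) P 1 := by
  have hcard := hP.2.2
  obtain ⟨S, hSA, hSfd, hScard, hPeq⟩ := exists_finset hA hP
  rcases hcard with hc | hc
  · have hSc : S.card = n := by omega
    have hmem : convexHull ℝ (S : Set (Pt d)) ∈ AClass d n A :=
      mem_AClass hA hSA hSfd (Or.inl hSc)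
    rw [hPeq]
    exact ⟨S, hSA, hSfd, hSc,
      path_mono (path_refl hmem) (by omega), path_mono (path_refl hmem) (by omega)⟩
  · have hSc : S.card = n + 1 := by omega
    obtain ⟨u, huS, huspan⟩ := reduce hSfd (by omega)
    have hUA : ((S.erase u : Finset (Pt d)) : Set (Pt d)) ⊆ A := fun x hx =>
      hSA (Finset.mem_coe.mpr (Finset.mem_of_mem_erase (Finset.mem_coe.mp hx)))
    have hUc : (S.erase u).card = n := by rw [Finset.card_erase_of_mem huS]; omega
    have hmemS : convexHull ℝ (S : Set (Pt d)) ∈ AClass d n A :=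
      mem_AClass hA hSA hSfd (Or.inr hSc)
    have hmemU : convexHull ℝ ((S.erase u : Finset (Pt d)) : Set (Pt d)) ∈ AClass d n A :=
      mem_AClass hA hUA huspan (Or.inl hUc)
    have hmv : Move d (convexHull ℝ (S : Set (Pt d)))
        (convexHull ℝ ((S.erase u : Finset (Pt d)) : Set (Pt d))) :=
      Or.inr (Or.inl (delete_move hA hSA huS huspan))
    rw [hPeq]
    exact ⟨S.erase u, hUA, huspan, hUc,
      path_single hmemS hmemU hmv, path_single hmemU hmemS (move_symm hmv)⟩

end Extract
/-- if `A ⊆ ℝ^d` is in convex position and affinely spans `ℝ^d`, the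
polytopes with `n` or `n+1` vertices whose vertex sets lie in `A` induce a connected
subgraph of `Γ(d)` of diameter at most `2n + 2`, and two such polytopes with exactly
`n` vertices are at distance at most `2n`. -/
theorem stmt_6 (d n : ℕ) (hd : 2 ≤ d) (hn : d + 1 ≤ n)
    (A : Set (Pt d)) (hA : ConvexPosition d A) (hAspan : affineSpan ℝ A = ⊤) :
    ConnectedIn d (AClass d n A) ∧
    (∀ P ∈ AClass d n A, ∀ Q ∈ AClass d n A, PathLE d (AClass d n A) P Q (2 * n + 2)) ∧
    (∀ P ∈ AClass d n A, ∀ Q ∈ AClass d n A, nVerts d P = n → nVerts d Q = n →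
      PathLE d (AClass d n A) P Q (2 * n)) := by
  have hn3 : 3 ≤ n := by omega
  have hthird : ∀ P ∈ AClass d n A, ∀ Q ∈ AClass d n A, nVerts d P = n → nVerts d Q = n →
      PathLE d (AClass d n A) P Q (2 * n) := by
    intro P hP Q hQ hPn hQn
    obtain ⟨U, hUA, hUfd, hUcard, hPeq⟩ := exists_finset hA hP
    obtain ⟨V, hVA, hVfd, hVcard, hQeq⟩ := exists_finset hA hQ
    rw [hPeq, hQeq]
    refine path_swap hA hn3 n U V hUA hVA hUfd hVfd (by omega) (by omega) ?_
    calc (V \ U).card ≤ V.card := Finset.card_le_card (Finset.sdiff_subset)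
      _ = n := by omega
  have hsecond : ∀ P ∈ AClass d n A, ∀ Q ∈ AClass d n A,
      PathLE d (AClass d n A) P Q (2 * n + 2) := by
    intro P hP Q hQ
    obtain ⟨U, hUA, hUfd, hUc, hPU, _⟩ := path_to_n hA hd hn hP
    obtain ⟨W, hWA, hWfd, hWc, _, hWQ⟩ := path_to_n hA hd hn hQ
    have hmid := path_swap hA hn3 n U W hUA hWA hUfd hWfd hUc hWc
      (by calc (W \ U).card ≤ W.card := Finset.card_le_card (Finset.sdiff_subset)
            _ = n := hWc)
    exact path_mono (path_trans (path_trans hPU hmid) hWQ) (by omega)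
  exact ⟨fun P hP Q hQ => ⟨2 * n + 2, hsecond P hP Q hQ⟩, hsecond, hthird⟩
end

section
/- For any positive integer k and any d-dimensional lattice simplex S contained in the hypercube [0,k]^d, there exists at least one lattice point x ∈ ℤ^d ∩ [0,k]^d that can be inserted in S. -/
open Set

lemma not_mem_convexHull_affine {E : Type*} [AddCommGroup E] [Module ℝ E]
    (g : E →ᵃ[ℝ] ℝ) {A : Set E} (hA : ∀ y ∈ A, g y ≤ 0) {p : E} (hp : 0 < g p) :
    p ∉ convexHull ℝ A := by
  intro hmem
  have h2 : convexHull ℝ A ⊆ {y | g y ≤ 0} := by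
    have : Convex ℝ {y | g y ≤ 0} := by
      have := (convex_Iic (0:ℝ)).affine_preimage g
      simpa [Set.preimage, Set.Iic] using this
    exact convexHull_min hA this
  exact absurd (h2 hmem) (by simpa using hp.not_ge)

lemma mem_extremePoints_of_not_mem_convexHull_diff
    {E : Type*} [AddCommGroup E] [Module ℝ E] {A : Set E} {p : E}
    (hpA : p ∈ A) (h : p ∉ convexHull ℝ (A \ {p})) :
    p ∈ Set.extremePoints ℝ (convexHull ℝ A) := by
  rw [mem_extremePoints_iff_forall_segment]
  refine ⟨subset_convexHull ℝ A hpA, fun y hy z hz hseg => ?_⟩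
  by_contra hcon
  push_neg at hcon
  obtain ⟨hyp, hzp⟩ := hcon
  rcases Set.eq_empty_or_nonempty (A \ {p}) with hB | hB
  · have hA : A ⊆ {p} := fun a ha => by
      by_contra hap
      exact absurd (Set.mem_diff_of_mem ha hap) (hB ▸ Set.notMem_empty a)
    have h2 : convexHull ℝ A ⊆ {p} := by
      have := convexHull_mono (𝕜 := ℝ) hA
      simpa using this
    exact hyp (h2 hy)
  · have hA : A = insert p (A \ {p}) := by
      rw [Set.insert_diff_singleton, Set.insert_eq_self.2 hpA]
    rw [hA, convexHull_insert hB] at hy hz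
    rw [mem_convexJoin] at hy hz
    obtain ⟨p1, hp1, u, hu, hyu⟩ := hy
    obtain ⟨p2, hp2, w, hw, hzw⟩ := hz
    rw [Set.mem_singleton_iff] at hp1 hp2
    rw [hp1] at hyu
    rw [hp2] at hzw
    obtain ⟨a, a', ha, ha', haa, hay⟩ := hyu
    obtain ⟨b, b', hb, hb', hbb, hbz⟩ := hzw
    obtain ⟨t, t', ht, ht', htt, htp⟩ := hseg
    set s := t * a' + t' * b' with hs
    have hps : (1 - s) • p + (t * a') • u + (t' * b') • w = p := by
      rw [← hay, ← hbz] at htp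
      have h1 : 1 - s = t * a + t' * b := by nlinarith
      rw [h1]
      linear_combination (norm := module) htp
    have hs0 : 0 ≤ s := by positivity
    rcases eq_or_lt_of_le hs0 with hs0' | hs0'
    · have h1 : t * a' = 0 ∧ t' * b' = 0 := by
        constructor <;> nlinarith [mul_nonneg ht ha', mul_nonneg ht' hb']
      rcases eq_or_lt_of_le ht with ht0 | htpos
      · apply hzp
        have ht1 : t' = 1 := by linarith
        rw [← htp, ← ht0, ht1]; simp
      · have ha'0 : a' = 0 := by
          rcases mul_eq_zero.1 h1.1 with h' | h'
          · exact absurd h'.symm htpos.ne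
          · exact h'
        apply hyp
        have ha1 : a = 1 := by linarith
        rw [← hay, ha'0, ha1]; simp
    · apply h
      have hv : (s⁻¹ * (t * a')) • u + (s⁻¹ * (t' * b')) • w ∈ convexHull ℝ (A \ {p}) := by
        apply (convex_convexHull ℝ (A \ {p})) hu hw
        · positivity
        · positivity
        · field_simp
          exact hs.symm
      have hpv : p = (s⁻¹ * (t * a')) • u + (s⁻¹ * (t' * b')) • w := by
        have h2 : s • p = (t * a') • u + (t' * b') • w := by
          have := hps
          rw [sub_smul, one_smul] at this
          linear_combination (norm := module) -this
        calc p = s⁻¹ • (s • p) := by rw [smul_smul, inv_mul_cancel₀ hs0'.ne', one_smul]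
        _ = _ := by rw [h2]; module
      rw [← hpv] at hv
      exact hv

lemma extremePoints_insert_of_coords {n : ℕ} {E : Type*} [AddCommGroup E] [Module ℝ E]
    (b : AffineBasis (Fin n) ℝ E) (x : E)
    (hpos : ∃ a₁ a₂ : Fin n, a₁ ≠ a₂ ∧ 0 < b.coord a₁ x ∧ 0 < b.coord a₂ x)
    (hneg : ∃ m : Fin n, b.coord m x < 0) :
    Set.extremePoints ℝ (convexHull ℝ (Set.range ⇑b ∪ {x})) = Set.range ⇑b ∪ {x} := by
  obtain ⟨m₀, hm₀⟩ := hneg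
  -- x is not in the convex hull of the basis points
  have hxV : x ∉ convexHull ℝ (Set.range ⇑b) := by
    apply not_mem_convexHull_affine (-(b.coord m₀))
    · rintro y ⟨i, rfl⟩
      rcases eq_or_ne m₀ i with h | h
      · simp [h]
      · simp [b.coord_apply_ne h]
    · simpa using hm₀
  have hxR : x ∉ Set.range ⇑b := fun hx => hxV (subset_convexHull ℝ _ hx)
  apply Subset.antisymm
  · exact extremePoints_convexHull_subset
  · rintro y (⟨j, rfl⟩ | hy)
    · -- b j is an extreme point
      apply mem_extremePoints_of_not_mem_convexHull_diff (Set.mem_union_left _ (Set.mem_range_self j))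
      have hdiff : (Set.range ⇑b ∪ {x}) \ {b j} ⊆ (⇑b '' {i | i ≠ j}) ∪ {x} := by
        rintro y ⟨⟨i, rfl⟩ | hy, hyj⟩
        · exact Or.inl ⟨i, fun hij => hyj (by rw [hij]; exact Set.mem_singleton _), rfl⟩
        · exact Or.inr hy
      intro hmem
      have hmem2 := convexHull_mono hdiff hmem
      set lj := b.coord j x with hlj
      rcases le_or_gt lj 0 with hljs | hljs
      · refine absurd hmem2 (not_mem_convexHull_affine (b.coord j) ?_ (by simp))
        rintro y (⟨i, hi, rfl⟩ | hy)
        · simp [b.coord_apply_ne (Ne.symm hi)]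
        · rw [Set.mem_singleton_iff] at hy; rw [hy]; exact hljs
      · obtain ⟨a₁, a₂, ha12, ha1, ha2⟩ := hpos
        obtain ⟨a, haj, hapos⟩ : ∃ a, a ≠ j ∧ 0 < b.coord a x := by
          rcases eq_or_ne a₁ j with h | h
          · exact ⟨a₂, by rw [← h]; exact ha12.symm, ha2⟩
          · exact ⟨a₁, h, ha1⟩
        set la := b.coord a x with hla
        refine absurd hmem2 (not_mem_convexHull_affine (la • b.coord j - lj • b.coord a) ?_ ?_)
        · rintro y (⟨i, hi, rfl⟩ | hy)
          · simp only [AffineMap.coe_sub, AffineMap.coe_smul, Pi.sub_apply, Pi.smul_apply,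
              smul_eq_mul]
            rw [b.coord_apply_ne (Ne.symm hi)]
            rcases eq_or_ne a i with h | h
            · rw [← h, b.coord_apply_eq]
              simp; nlinarith
            · rw [b.coord_apply_ne h]; simp
          · rw [Set.mem_singleton_iff] at hy
            rw [hy]
            simp only [AffineMap.coe_sub, AffineMap.coe_smul, Pi.sub_apply, Pi.smul_apply,
              smul_eq_mul]
            rw [← hla, ← hlj]; ring_nf; simp
        · simp only [AffineMap.coe_sub, AffineMap.coe_smul, Pi.sub_apply, Pi.smul_apply,
            smul_eq_mul, b.coord_apply_eq, b.coord_apply_ne haj]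
          simpa using hapos
    · rw [Set.mem_singleton_iff] at hy
      rw [hy]
      refine mem_extremePoints_of_not_mem_convexHull_diff (A := Set.range ⇑b ∪ {x})
        (Set.mem_union_right _ rfl) ?_
      have hdiff : (Set.range ⇑b ∪ {x}) \ {x} = Set.range ⇑b := by
        rw [Set.union_diff_distrib, Set.diff_singleton_eq_self hxR]
        simp
      rw [hdiff]
      exact hxV

lemma core_signs {n k : ℕ} (hk : 1 ≤ k) (β t : Fin n → ℝ)
    (hsum : ∑ m, β m = 0) (hst : ∑ m, β m * t m = 1)
    (hint : ∀ m, ∃ z : ℤ, t m = z) (h0 : ∀ m, 0 ≤ t m) (hkk : ∀ m, t m ≤ k)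
    (hnz : ∀ m, β m ≠ 0) {p r : Fin n} (hpr : p ≠ r) (hp : 0 < β p) (hr : 0 < β r) :
    ∃ (i : Fin n) (s : ℝ), (s = 1 ∨ s = -1) ∧ 0 ≤ t i + s ∧ t i + s ≤ k ∧
      (∃ m₁ m₂ : Fin n, m₁ ≠ m₂ ∧ 0 < (if m₁ = i then (1:ℝ) else 0) + s * β m₁ ∧
        0 < (if m₂ = i then (1:ℝ) else 0) + s * β m₂) ∧
      (∃ m₃ : Fin n, (if m₃ = i then (1:ℝ) else 0) + s * β m₃ < 0) := by
  have hk1 : (1:ℝ) ≤ (k:ℝ) := by exact_mod_cast hk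
  -- there is a negative index
  obtain ⟨q, hq⟩ : ∃ q, β q < 0 := by
    by_contra hall
    push_neg at hall
    have := (Finset.sum_eq_zero_iff_of_nonneg (fun m _ => hall m)).1 hsum p (Finset.mem_univ p)
    exact hnz p this
  have hstep : ∀ i, t i < k → t i + 1 ≤ k := by
    intro i hlt
    obtain ⟨z, hz⟩ := hint i
    rw [hz] at hlt ⊢
    have h1 : z < (k:ℤ) := by exact_mod_cast hlt
    have h2 : z + 1 ≤ (k:ℤ) := by omega
    exact_mod_cast h2
  have hstep0 : ∀ i, 0 < t i → 1 ≤ t i := by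
    intro i hlt
    obtain ⟨z, hz⟩ := hint i
    rw [hz] at hlt ⊢
    have h1 : (0:ℤ) < z := by exact_mod_cast hlt
    exact_mod_cast h1
  by_cases hC1 : ∃ i, 0 < β i ∧ t i < k
  · obtain ⟨i, hbi, hti⟩ := hC1
    obtain ⟨i', hi'i, hbi'⟩ : ∃ i', i' ≠ i ∧ 0 < β i' := by
      rcases eq_or_ne i p with h | h
      · exact ⟨r, by rw [h]; exact hpr.symm, hr⟩
      · exact ⟨p, Ne.symm h, hp⟩
    have hqi : q ≠ i := fun h => absurd (h ▸ hq) (by simp; linarith)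
    refine ⟨i, 1, Or.inl rfl, by linarith [h0 i], by linarith [hstep i hti], ?_, ?_⟩
    · exact ⟨i, i', fun h => hi'i h.symm, by simp; linarith, by rw [if_neg hi'i]; linarith⟩
    · exact ⟨q, by rw [if_neg hqi]; linarith⟩
  · push_neg at hC1
    have hPk : ∀ i, 0 < β i → t i = k := fun i hbi => le_antisymm (hkk i) (hC1 i hbi)
    by_cases hC2 : ∃ q', q' ≠ q ∧ β q' < 0
    · obtain ⟨q', hq'q, hbq'⟩ := hC2
      by_cases hC2a : ∃ i, β i < 0 ∧ 0 < t i
      · obtain ⟨i, hbi, hti⟩ := hC2a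
        obtain ⟨i'', hi''i, hbi''⟩ : ∃ i'', i'' ≠ i ∧ β i'' < 0 := by
          rcases eq_or_ne i q with h | h
          · exact ⟨q', by rw [h]; exact hq'q, hbq'⟩
          · exact ⟨q, Ne.symm h, hq⟩
        have hpi : p ≠ i := fun h => absurd (h ▸ hp) (by simp; linarith)
        refine ⟨i, -1, Or.inr rfl, by linarith [hstep0 i hti], by linarith [hkk i], ?_, ?_⟩
        · exact ⟨i, i'', fun h => hi''i h.symm, by simp; linarith,
            by rw [if_neg hi''i]; linarith⟩
        · exact ⟨p, by rw [if_neg hpi]; linarith⟩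
      · push_neg at hC2a
        have hN0 : ∀ i, β i < 0 → t i = 0 := fun i hbi => le_antisymm (hC2a i hbi) (h0 i)
        have key : ∀ m, β m * t m = k * max (β m) 0 := by
          intro m
          rcases (hnz m).lt_or_gt with h | h
          · rw [hN0 m h, max_eq_right h.le]; ring
          · rw [hPk m h, max_eq_left h.le]; ring
        have hsum1 : (k:ℝ) * ∑ m, max (β m) 0 = 1 := by
          rw [Finset.mul_sum]
          rw [← hst]
          exact Finset.sum_congr rfl fun m _ => (key m).symm
        have hmax1 : ∑ m, max (β m) 0 ≤ 1 := by nlinarith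
        have hneg1 : ∑ m, max (-β m) 0 ≤ 1 := by
          have hid : ∀ x : ℝ, max (-x) 0 = max x 0 - x := by
            intro x
            rcases le_total x 0 with h | h
            · rw [max_eq_left (by linarith), max_eq_right h]; ring
            · rw [max_eq_right (by linarith), max_eq_left h]; ring
          calc ∑ m, max (-β m) 0 = ∑ m, (max (β m) 0 - β m) :=
                Finset.sum_congr rfl fun m _ => hid (β m)
            _ = (∑ m, max (β m) 0) - ∑ m, β m := by rw [Finset.sum_sub_distrib]
            _ ≤ 1 := by rw [hsum]; linarith
        obtain ⟨n', hbn', hbn'1⟩ : ∃ n', β n' < 0 ∧ -1 < β n' := by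
          by_contra hall
          push_neg at hall
          have hq1 : (1:ℝ) ≤ max (-β q) 0 := by
            rw [max_eq_left (by linarith)]; linarith [hall q hq]
          have hq'1 : (1:ℝ) ≤ max (-β q') 0 := by
            rw [max_eq_left (by linarith)]; linarith [hall q' hbq']
          have hsub : ({q, q'} : Finset (Fin n)) ⊆ Finset.univ := Finset.subset_univ _
          have h2 : max (-β q) 0 + max (-β q') 0 ≤ ∑ m, max (-β m) 0 := by
            rw [← Finset.sum_pair (f := fun m => max (-β m) 0) (fun h => hq'q h.symm)]
            exact Finset.sum_le_sum_of_subset_of_nonneg hsub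
              (fun m _ _ => le_max_right _ _)
          linarith
        have hpn' : p ≠ n' := fun h => absurd (h ▸ hp) (by simp; linarith)
        obtain ⟨n'', hn''n', hbn''⟩ : ∃ n'', n'' ≠ n' ∧ β n'' < 0 := by
          rcases eq_or_ne n' q with h | h
          · exact ⟨q', by rw [h]; exact hq'q, hbq'⟩
          · exact ⟨q, Ne.symm h, hq⟩
        refine ⟨n', 1, Or.inl rfl, ?_, ?_, ?_, ?_⟩
        · rw [hN0 n' hbn']; norm_num
        · rw [hN0 n' hbn']; linarith
        · exact ⟨n', p, Ne.symm hpn', by simp; linarith, by rw [if_neg hpn']; linarith⟩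
        · exact ⟨n'', by rw [if_neg hn''n']; linarith⟩
    · push_neg at hC2
      have hNq : ∀ m, m ≠ q → 0 < β m := by
        intro m hm
        rcases (hnz m).lt_or_gt with h | h
        · exact absurd h (not_lt.2 (hC2 m hm))
        · exact h
      have key : ∀ m, β m * t m = k * β m + (if m = q then β q * (t q - (k:ℝ)) else 0) := by
        intro m
        rcases eq_or_ne m q with h | h
        · rw [if_pos h, h]; ring
        · rw [if_neg h, hPk m (hNq m h)]; ring
      have hq1 : β q * (t q - (k:ℝ)) = 1 := by
        have h1 : ∑ m, β m * t m
            = ∑ m, ((k:ℝ) * β m + if m = q then β q * (t q - (k:ℝ)) else 0) :=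
          Finset.sum_congr rfl fun m _ => key m
        rw [Finset.sum_add_distrib, ← Finset.mul_sum, hsum,
          Finset.sum_ite_eq' Finset.univ q (fun _ => β q * (t q - (k:ℝ)))] at h1
        simp at h1
        linarith [hst, h1]
      have htqk : t q < (k:ℝ) := by
        rcases lt_or_eq_of_le (hkk q) with h | h
        · exact h
        · rw [h] at hq1; simp at hq1
      have htqk1 : t q + 1 ≤ (k:ℝ) := hstep q htqk
      have hβq1 : -1 ≤ β q := by nlinarith
      have hsump : ∑ m ∈ Finset.univ.erase q, β m = -β q := by
        have := Finset.sum_erase_add Finset.univ β (Finset.mem_univ q)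
        linarith [hsum, this]
      have hprq : p ≠ q := fun h => absurd (h ▸ hp) (by simp; linarith)
      have hrrq : r ≠ q := fun h => absurd (h ▸ hr) (by simp; linarith)
      have hprsum : β p + β r ≤ -β q := by
        rw [← hsump, ← Finset.sum_pair hpr]
        refine Finset.sum_le_sum_of_subset_of_nonneg ?_ ?_
        · intro m hm
          simp only [Finset.mem_insert, Finset.mem_singleton] at hm
          rcases hm with h | h <;> subst h <;>
            simp [Finset.mem_erase, hprq, hrrq]
        · intro m hm _
          rw [Finset.mem_erase] at hm
          exact (hNq m hm.1).le
      obtain ⟨i, o, hio, hbi1, hbipos, hbopos⟩ :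
          ∃ i o : Fin n, i ≠ o ∧ β i < 1 ∧ 0 < β i ∧ 0 < β o := by
        rcases lt_or_ge (β p) 1 with h | h
        · exact ⟨p, r, hpr, h, hp, hr⟩
        · exact ⟨r, p, hpr.symm, by nlinarith, hr, hp⟩
      have hiq : i ≠ q := fun h => absurd (h ▸ hbipos) (by simp; linarith)
      have hoq : o ≠ q := fun h => absurd (h ▸ hbopos) (by simp; linarith)
      have hqi : q ≠ i := Ne.symm hiq
      have hoi : o ≠ i := Ne.symm hio
      refine ⟨i, -1, Or.inr rfl, ?_, ?_, ?_, ?_⟩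
      · rw [hPk i hbipos]; linarith
      · rw [hPk i hbipos]; linarith
      · exact ⟨i, q, Ne.symm hqi, by simp; linarith, by rw [if_neg hqi]; linarith⟩
      · exact ⟨o, by rw [if_neg hoi]; linarith⟩

lemma exists_good_point {d k : ℕ} (hd : 2 ≤ d) (hk : 1 ≤ k)
    (b : AffineBasis (Fin (d+1)) ℝ (Pt d))
    (hlat : ∀ m, IsLatticePt d (b m)) (hcube : ∀ m, b m ∈ Cube d k) :
    ∃ x : Pt d, IsLatticePt d x ∧ x ∈ Cube d k ∧
      (∃ a₁ a₂ : Fin (d+1), a₁ ≠ a₂ ∧ 0 < b.coord a₁ x ∧ 0 < b.coord a₂ x) ∧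
      (∃ m : Fin (d+1), b.coord m x < 0) := by
  have hk1 : (1:ℝ) ≤ (k:ℝ) := by exact_mod_cast hk
  set c : Fin d := ⟨0, by omega⟩ with hc
  set e : Pt d := Pi.single c 1 with he
  set β : Fin (d+1) → ℝ := fun m => (b.coord m).linear e with hβ
  set t : Fin (d+1) → ℝ := fun m => b m c with ht
  -- coordinates of shifted points
  have hcoord_shift : ∀ (s : ℝ) (i m : Fin (d+1)),
      b.coord m (b i + s • e) = (if m = i then 1 else 0) + s * β m := by
    intro s i m
    have h1 : b i + s • e = s • e +ᵥ b i := by rw [vadd_eq_add]; abel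
    rw [h1, AffineMap.map_vadd, vadd_eq_add, LinearMap.map_smul, smul_eq_mul,
      b.coord_apply]
    ring
  have hβsum : ∑ m, β m = 0 := by
    have h1 := b.sum_coord_apply_eq_one (b 0 + (1:ℝ) • e)
    rw [Finset.sum_congr rfl (fun m _ => hcoord_shift 1 0 m)] at h1
    rw [Finset.sum_add_distrib, Finset.sum_ite_eq' Finset.univ 0 (fun _ => (1:ℝ))] at h1
    simp only [Finset.mem_univ, if_true, one_mul] at h1
    linarith
  have hrep : ∑ m, β m • b m = e := by
    have h1 := b.linear_combination_coord_eq_self (b 0 + (1:ℝ) • e)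
    rw [Finset.sum_congr rfl (fun m _ => by rw [hcoord_shift 1 0 m])] at h1
    have h2 : ∀ m : Fin (d+1), ((if m = 0 then (1:ℝ) else 0) + 1 * β m) • b m
        = (if m = 0 then b m else 0) + β m • b m := by
      intro m
      rw [add_smul, ite_smul, one_smul, zero_smul, one_mul]
    rw [Finset.sum_congr rfl (fun m _ => h2 m), Finset.sum_add_distrib,
      Finset.sum_ite_eq' Finset.univ 0 (fun m => b m)] at h1
    simp only [Finset.mem_univ, if_true, one_smul] at h1
    have := add_left_cancel h1
    exact this
  have hβt : ∑ m, β m * t m = 1 := by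
    have h1 := congrFun hrep c
    rw [Finset.sum_apply] at h1
    simp only [Pi.smul_apply, smul_eq_mul] at h1
    rw [he] at h1
    simp only [Pi.single_eq_same] at h1
    exact h1
  have hint : ∀ m, ∃ z : ℤ, t m = z := fun m => hlat m c
  have ht0 : ∀ m, 0 ≤ t m := fun m => (hcube m c).1
  have htk : ∀ m, t m ≤ k := fun m => (hcube m c).2
  have hstep : ∀ i, t i < k → t i + 1 ≤ k := by
    intro i hlt
    obtain ⟨z, hz⟩ := hint i
    rw [hz] at hlt ⊢
    have h1 : z < (k:ℤ) := by exact_mod_cast hlt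
    have h2 : z + 1 ≤ (k:ℤ) := by omega
    exact_mod_cast h2
  -- assembly: a candidate index/sign gives the desired point
  have assemble : ∀ (i : Fin (d+1)) (s : ℝ), (s = 1 ∨ s = -1) →
      0 ≤ t i + s → t i + s ≤ k →
      (∃ m₁ m₂ : Fin (d+1), m₁ ≠ m₂ ∧ 0 < (if m₁ = i then (1:ℝ) else 0) + s * β m₁ ∧
        0 < (if m₂ = i then (1:ℝ) else 0) + s * β m₂) →
      (∃ m₃ : Fin (d+1), (if m₃ = i then (1:ℝ) else 0) + s * β m₃ < 0) →
      ∃ x : Pt d, IsLatticePt d x ∧ x ∈ Cube d k ∧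
        (∃ a₁ a₂ : Fin (d+1), a₁ ≠ a₂ ∧ 0 < b.coord a₁ x ∧ 0 < b.coord a₂ x) ∧
        (∃ m : Fin (d+1), b.coord m x < 0) := by
    intro i s hs hb0 hbk hpos hneg
    refine ⟨b i + s • e, ?_, ?_, ?_, ?_⟩
    · intro c'
      obtain ⟨z, hz⟩ := hlat i c'
      have hxc : (b i + s • e) c' = b i c' + s * (if c' = c then 1 else 0) := by
        simp [he, Pi.single_apply]
      by_cases hcc : c' = c
      · rcases hs with rfl | rfl
        · exact ⟨z + 1, by rw [hxc, if_pos hcc, hz]; push_cast; ring⟩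
        · exact ⟨z - 1, by rw [hxc, if_pos hcc, hz]; push_cast; ring⟩
      · exact ⟨z, by rw [hxc, if_neg hcc, hz]; ring⟩
    · intro c'
      have hxc : (b i + s • e) c' = b i c' + s * (if c' = c then 1 else 0) := by
        simp [he, Pi.single_apply]
      by_cases hcc : c' = c
      · rw [hxc, if_pos hcc, hcc, mul_one]
        exact ⟨hb0, hbk⟩
      · rw [hxc, if_neg hcc, mul_zero, add_zero]
        exact hcube i c'
    · obtain ⟨m₁, m₂, h12, h1, h2⟩ := hpos
      exact ⟨m₁, m₂, h12, by rw [hcoord_shift]; exact h1, by rw [hcoord_shift]; exact h2⟩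
    · obtain ⟨m₃, h3⟩ := hneg
      exact ⟨m₃, by rw [hcoord_shift]; exact h3⟩
  -- β is not identically zero
  have hβne : ∃ m, β m ≠ 0 := by
    by_contra hall
    push_neg at hall
    rw [Finset.sum_congr rfl (fun m _ => by rw [hall m, zero_mul])] at hβt
    simp at hβt
  obtain ⟨p, hp⟩ : ∃ p, 0 < β p := by
    by_contra hall
    push_neg at hall
    obtain ⟨m, hm⟩ := hβne
    exact hm ((Finset.sum_eq_zero_iff_of_nonpos (fun m _ => hall m)).1 hβsum m
      (Finset.mem_univ m))
  obtain ⟨q, hq⟩ : ∃ q, β q < 0 := by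
    by_contra hall
    push_neg at hall
    obtain ⟨m, hm⟩ := hβne
    exact hm ((Finset.sum_eq_zero_iff_of_nonneg (fun m _ => hall m)).1 hβsum m
      (Finset.mem_univ m))
  by_cases hzero : ∃ m₀, β m₀ = 0
  · obtain ⟨m₀, hm₀⟩ := hzero
    have hpm : p ≠ m₀ := fun h => by rw [h, hm₀] at hp; exact lt_irrefl 0 hp
    have hqm : q ≠ m₀ := fun h => by rw [h, hm₀] at hq; exact lt_irrefl 0 hq
    rcases lt_or_eq_of_le (htk m₀) with hlt | heq
    · refine assemble m₀ 1 (Or.inl rfl) (by linarith [ht0 m₀]) (by linarith [hstep m₀ hlt])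
        ⟨m₀, p, Ne.symm hpm, by simp [hm₀], by rw [if_neg hpm]; linarith⟩
        ⟨q, by rw [if_neg hqm]; linarith⟩
    · refine assemble m₀ (-1) (Or.inr rfl) (by rw [heq]; linarith) (by rw [heq]; linarith)
        ⟨m₀, q, Ne.symm hqm, by simp [hm₀], by rw [if_neg hqm]; linarith⟩
        ⟨p, by rw [if_neg hpm]; linarith⟩
  · push_neg at hzero
    -- a third index
    obtain ⟨r, hrp, hrq⟩ : ∃ r, r ≠ p ∧ r ≠ q := by
      by_contra hall
      push_neg at hall
      have hsub : (Finset.univ : Finset (Fin (d+1))) ⊆ {p, q} := by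
        intro m _
        rcases eq_or_ne m p with h | h
        · simp [h]
        · simp [hall m h]
      have hcard := Finset.card_le_card hsub
      have h2 : ({p, q} : Finset (Fin (d+1))).card ≤ 2 :=
        (Finset.card_insert_le _ _).trans (by simp)
      simp at hcard
      omega
    rcases (hzero r).lt_or_gt with hrneg | hrpos
    · -- apply core to (-β, k - t)
      have hA1 : ∑ m, -β m = 0 := by rw [Finset.sum_neg_distrib, hβsum, neg_zero]
      have hA2 : ∑ m, -β m * ((k:ℝ) - t m) = 1 := by
        have h2 : ∀ m : Fin (d+1), -β m * ((k:ℝ) - t m) = β m * t m - (k:ℝ) * β m := by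
          intro m; ring
        rw [Finset.sum_congr rfl (fun m _ => h2 m), Finset.sum_sub_distrib,
          ← Finset.mul_sum, hβsum, hβt]
        ring
      have hA3 : ∀ m, ∃ z : ℤ, (k:ℝ) - t m = (z:ℝ) := by
        intro m
        obtain ⟨z, hz⟩ := hint m
        exact ⟨(k:ℤ) - z, by rw [hz]; push_cast; ring⟩
      have hA4 : ∀ m, 0 ≤ (k:ℝ) - t m := fun m => by linarith [htk m]
      have hA5 : ∀ m, (k:ℝ) - t m ≤ (k:ℝ) := fun m => by linarith [ht0 m]
      have hA6 : ∀ m, -β m ≠ 0 := fun m => neg_ne_zero.2 (hzero m)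
      have hcore := core_signs hk (fun m => -β m) (fun m => (k:ℝ) - t m)
        hA1 hA2 hA3 hA4 hA5 hA6
        (p := q) (r := r) (Ne.symm hrq) (by simpa using hq) (by simpa using hrneg)
      obtain ⟨i, s', hs', h0', hk', hpos', hneg'⟩ := hcore
      have hs2 : -s' = 1 ∨ -s' = -1 := by
        rcases hs' with rfl | rfl
        · exact Or.inr rfl
        · exact Or.inl (by norm_num)
      refine assemble i (-s') hs2 (by linarith) (by linarith) ?_ ?_
      · obtain ⟨m₁, m₂, h12, h1, h2⟩ := hpos'
        exact ⟨m₁, m₂, h12, by rw [show (-s') * β m₁ = s' * (-β m₁) by ring]; exact h1,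
          by rw [show (-s') * β m₂ = s' * (-β m₂) by ring]; exact h2⟩
      · obtain ⟨m₃, h3⟩ := hneg'
        exact ⟨m₃, by rw [show (-s') * β m₃ = s' * (-β m₃) by ring]; exact h3⟩
    · have hcore := core_signs hk β t hβsum hβt hint ht0 htk hzero
        (p := p) (r := r) (Ne.symm hrp) hp hrpos
      obtain ⟨i, s, hs, h0', hk', hpos', hneg'⟩ := hcore
      exact assemble i s hs h0' hk' hpos' hneg'

/-- for any positive `k`, some lattice point of `[0,k]^d` can be
inserted in any `d`-dimensional lattice simplex contained in `[0,k]^d`. -/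
theorem stmt_9 (d k : ℕ) (hd : 2 ≤ d) (hk : 1 ≤ k) (S : Set (Pt d))
    (hS : IsPolytope d S) (hSd : FullDim d S) (hlat : IsLatticePoly d S)
    (hsub : S ⊆ Cube d k) (hsimp : nVerts d S = d + 1) :
    ∃ x : Pt d, IsLatticePt d x ∧ x ∈ Cube d k ∧ CanInsert d S x := by
  classical
  set V := Set.extremePoints ℝ S with hV
  obtain ⟨F, hF⟩ := hS
  have hVF : V ⊆ ↑F := by rw [hV, hF]; exact extremePoints_convexHull_subset
  have hVfin : V.Finite := F.finite_toSet.subset hVF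
  have hconv : Convex ℝ S := hF ▸ convex_convexHull ℝ _
  have hcomp : IsCompact S := hF ▸ F.finite_toSet.isCompact_convexHull ℝ
  have hSV : convexHull ℝ V = S := by
    have h1 := closure_convexHull_extremePoints hcomp hconv
    rwa [IsClosed.closure_eq (hVfin.isCompact_convexHull ℝ).isClosed] at h1
  have hspanV : affineSpan ℝ V = ⊤ := by
    rw [← affineSpan_convexHull, hSV]; exact hSd
  have hcard : hVfin.toFinset.card = d + 1 := by
    rw [← Set.ncard_eq_toFinset_card V hVfin]; exact hsimp
  set e := hVfin.toFinset.equivFinOfCardEq hcard with hee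
  set v : Fin (d+1) → Pt d := fun i => ((e.symm i : hVfin.toFinset) : Pt d) with hv
  have hvmem : ∀ i, v i ∈ V := fun i => (Set.Finite.mem_toFinset hVfin).1 (e.symm i).2
  have hrange : Set.range v = V := by
    apply Set.Subset.antisymm
    · rintro _ ⟨i, rfl⟩; exact hvmem i
    · intro y hy
      exact ⟨e ⟨y, (Set.Finite.mem_toFinset hVfin).2 hy⟩, by simp [hv]⟩
  have hspan' : affineSpan ℝ (Set.range v) = ⊤ := by rw [hrange]; exact hspanV
  have hai : AffineIndependent ℝ v := by
    rw [affineIndependent_iff_finrank_vectorSpan_eq ℝ v (n := d) (by simp)]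
    rw [hrange]
    have h1 : vectorSpan ℝ V = ⊤ := by
      rw [← direction_affineSpan, hspanV]
      exact AffineSubspace.direction_top ℝ _ _
    rw [h1, finrank_top]
    exact Module.finrank_fin_fun ℝ
  let b : AffineBasis (Fin (d+1)) ℝ (Pt d) := ⟨v, hai, hspan'⟩
  have hbv : ⇑b = v := rfl
  have hlatb : ∀ m, IsLatticePt d (b m) := fun m => hlat _ (hvmem m)
  have hcubeb : ∀ m, b m ∈ Cube d k := fun m =>
    hsub (by rw [← hSV]; exact subset_convexHull ℝ V (hvmem m))
  obtain ⟨x, hxlat, hxcube, hpos, hneg⟩ := exists_good_point hd hk b hlatb hcubeb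
  refine ⟨x, hxlat, hxcube, ?_⟩
  unfold CanInsert
  have h1 : convexHull ℝ (S ∪ {x}) = convexHull ℝ (Set.range ⇑b ∪ {x}) := by
    rw [hbv, hrange]
    calc convexHull ℝ (S ∪ {x}) = convexHull ℝ (convexHull ℝ V ∪ {x}) := by rw [hSV]
      _ = convexHull ℝ (V ∪ {x}) := convexHull_convexHull_union_left V {x}
  rw [h1, extremePoints_insert_of_coords b x hpos hneg, hbv, hrange]
end
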